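/- arXiv:1606.08818 — 6 statements merged into one kernel-verified Lean document; each statement's English description precedes it below -/
import Mathlib

section
/- For every real symmetric m×m matrix C, the complex matrix I + iC is invertible and the real part Re((I + iC)^{−1}) is a positive definite symmetric matrix. -/
open Real Filter Matrix

noncomputable section

/-- The Hessian matrix of a function `v : ℝ^m → ℝ` at `x`. -/
def hessianMatrix {m : ℕ} (v : (Fin m → ℝ) → ℝ) (x : Fin m → ℝ) :
    Matrix (Fin m) (Fin m) ℝ :=
  Matrix.of fun i j => iteratedFDeriv ℝ 2 v x ![Pi.single i 1, Pi.single j 1]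

/-- The lifted Lagrangian angle θ̃(A) = ∑ arctan λ_j(A) of a real symmetric matrix. -/
def liftedAngle {m : ℕ} (A : Matrix (Fin m) (Fin m) ℝ) : ℝ :=
  if h : A.IsHermitian then ∑ j, Real.arctan (h.eigenvalues j) else 0

/-- The Harvey–Lawson branches `F_c` of the special Lagrangian subequation. -/
def Fc (m : ℕ) (c : ℝ) : Set (Matrix (Fin m) (Fin m) ℝ) :=
  {A | A.IsSymm ∧ c ≤ liftedAngle A}

/-- `I_n = diag(0,1,…,1)` as a complex `(n+1)×(n+1)` matrix. -/
def Inmat (n : ℕ) : Matrix (Fin (n+1)) (Fin (n+1)) ℂ :=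
  Matrix.diagonal fun i => if i = 0 then 0 else 1

/-- The complex matrix `I_n + i A`. -/
def cmat {n : ℕ} (A : Matrix (Fin (n+1)) (Fin (n+1)) ℝ) :
    Matrix (Fin (n+1)) (Fin (n+1)) ℂ :=
  Inmat n + Complex.I • A.map (fun a => (a : ℂ))

open Classical in
/-- The lifted space-time Lagrangian angle Θ̃, summing `Complex.arg` (with values in
`(-π, π]`) over the roots (with multiplicity) of the characteristic polynomial of
`I_n + i A`, shifted by `π/2` over the singular set `S = {det (I_n + iA) = 0}` where only
the nonzero roots are counted. -/
def spaceTimeAngle {n : ℕ} (A : Matrix (Fin (n+1)) (Fin (n+1)) ℝ) : ℝ :=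
  if (cmat A).det = 0 then
    π / 2 + ((((cmat A).charpoly.roots).filter (fun z => z ≠ 0)).map Complex.arg).sum
  else (((cmat A).charpoly.roots).map Complex.arg).sum

/-- The degenerate special Lagrangian subequation `ℱ_c ⊂ Sym(ℝ^{n+1})`. -/
def calF (n : ℕ) (c : ℝ) : Set (Matrix (Fin (n+1)) (Fin (n+1)) ℝ) :=
  {A | A.IsSymm ∧ c ≤ spaceTimeAngle A}

/-- Interior of a set of symmetric matrices, relative to the symmetric matrices. -/
def symInterior {m : ℕ} (F : Set (Matrix (Fin m) (Fin m) ℝ)) :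
    Set (Matrix (Fin m) (Fin m) ℝ) :=
  {A | A.IsSymm ∧ ∀ᶠ B in nhds A, B.IsSymm → B ∈ F}

/-- The dual subequation `F̃ = (−Int F)ᶜ` (within the symmetric matrices). -/
def dualSub {m : ℕ} (F : Set (Matrix (Fin m) (Fin m) ℝ)) :
    Set (Matrix (Fin m) (Fin m) ℝ) :=
  {A | A.IsSymm ∧ -A ∉ symInterior F}

/-- An `EReal`-valued (i.e. `[−∞,∞)`-valued) function is subaffine on `U` if, for every
affine function `a` and compact `K ⊆ U`, `u ≤ a` on `∂K` implies `u ≤ a` on `K`. -/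
def IsSubaffine {m : ℕ} (U : Set (Fin m → ℝ)) (u : (Fin m → ℝ) → EReal) : Prop :=
  ∀ (a : (Fin m → ℝ) →ᵃ[ℝ] ℝ) (K : Set (Fin m → ℝ)), IsCompact K → K ⊆ U →
    (∀ x ∈ frontier K, u x ≤ (a x : EReal)) → ∀ x ∈ K, u x ≤ (a x : EReal)

/-- `u` is of type `F` on `U` (i.e. `u ∈ F(U)`): `u` is `[−∞,∞)`-valued, upper
semicontinuous on `U`, and `u + v` is subaffine on `U` for every `C²` function `v`
whose Hessian lies in the dual subequation `F̃` at every point of `U`. -/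
def IsTypeF {m : ℕ} (F : Set (Matrix (Fin m) (Fin m) ℝ)) (U : Set (Fin m → ℝ))
    (u : (Fin m → ℝ) → EReal) : Prop :=
  (∀ x ∈ U, u x ≠ ⊤) ∧ UpperSemicontinuousOn u U ∧
    ∀ v : (Fin m → ℝ) → ℝ, ContDiffOn ℝ 2 v U →
      (∀ x ∈ U, hessianMatrix v x ∈ dualSub F) →
      IsSubaffine U (fun x => u x + ((v x : ℝ) : EReal))

/-- The lower-right `n×n` block `A⁺` of an `(n+1)×(n+1)` matrix. -/
def Aplus {n : ℕ} (A : Matrix (Fin (n+1)) (Fin (n+1)) ℝ) : Matrix (Fin n) (Fin n) ℝ :=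
  Matrix.of fun i j => A i.succ j.succ

end

/-- For every real symmetric `m×m` matrix `C`, the complex matrix `I + iC` is invertible
and the real part of its inverse is a positive definite (symmetric) matrix. -/
theorem re_inv_posDef (m : ℕ) (C : Matrix (Fin m) (Fin m) ℝ) (hC : C.IsSymm) :
    IsUnit ((1 : Matrix (Fin m) (Fin m) ℂ) + Complex.I • C.map (fun a => (a : ℂ))) ∧
    ((((1 : Matrix (Fin m) (Fin m) ℂ) +
        Complex.I • C.map (fun a => (a : ℂ)))⁻¹).map Complex.re).PosDef := by
  classical
  set D : Matrix (Fin m) (Fin m) ℝ := 1 + C * C with hDdef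
  have hD : D.PosDef := by
    rw [posDef_iff_dotProduct_mulVec]
    constructor
    · show Dᴴ = D
      rw [conjTranspose_eq_transpose_of_trivial]
      simp [hDdef, transpose_add, transpose_mul, hC.eq]
    · intro x hx
      have h1 : star x ⬝ᵥ (D *ᵥ x) = x ⬝ᵥ x + (C *ᵥ x) ⬝ᵥ (C *ᵥ x) := by
        rw [show (star x : Fin m → ℝ) = x from funext fun i => rfl]
        rw [hDdef, add_mulVec, dotProduct_add, one_mulVec, ← mulVec_mulVec,
          dotProduct_mulVec x C]
        nth_rewrite 1 [← hC.eq]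
        rw [vecMul_transpose]
      rw [h1]
      have hx2 : 0 < x ⬝ᵥ x := by
        have := dotProduct_self_star_pos_iff (v := x)
        simp only [star_trivial] at this
        exact this.2 hx
      have hc2 : 0 ≤ (C *ᵥ x) ⬝ᵥ (C *ᵥ x) := by
        have := dotProduct_self_star_nonneg (v := C *ᵥ x)
        simpa using this
      linarith
  have hDdet : IsUnit D.det := isUnit_iff_ne_zero.mpr hD.det_pos.ne'
  set φ : Matrix (Fin m) (Fin m) ℝ →+* Matrix (Fin m) (Fin m) ℂ :=
    Complex.ofRealHom.mapMatrix with hφ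
  have hmap : ∀ X : Matrix (Fin m) (Fin m) ℝ, X.map (fun a => (a:ℂ)) = φ X := fun X => rfl
  set Cc : Matrix (Fin m) (Fin m) ℂ := C.map (fun a => (a : ℂ)) with hCc
  set M := (1 : Matrix (Fin m) (Fin m) ℂ) + Complex.I • Cc with hM
  set N := (1 : Matrix (Fin m) (Fin m) ℂ) - Complex.I • Cc with hN
  have ha : ∀ X : Matrix (Fin m) (Fin m) ℂ,
      (Complex.I • X) * (Complex.I • X) = -(X * X) := fun X => by
    rw [smul_mul_assoc, mul_smul_comm, smul_smul, Complex.I_mul_I, neg_one_smul]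
  have hMN : M * N = φ D := by
    rw [hM, hN, hDdef, map_add, _root_.map_one, _root_.map_mul, hCc, hmap C]
    calc (1 + Complex.I • φ C) * (1 - Complex.I • φ C)
        = 1 - (Complex.I • φ C) * (Complex.I • φ C) := by
          noncomm_ring
          simp only [smul_add, smul_smul, Complex.I_mul_I, neg_one_smul, neg_smul,
            one_smul, neg_neg]
          abel
      _ = 1 + φ C * φ C := by rw [ha, sub_neg_eq_add]
  have hUnit : IsUnit M := by
    rw [Matrix.isUnit_iff_isUnit_det, isUnit_iff_ne_zero]
    intro h
    have : (M * N).det = 0 := by rw [det_mul, h, zero_mul]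
    rw [hMN, ← RingHom.map_det] at this
    exact hD.det_pos.ne' (by simpa using this)
  have hMinv : M⁻¹ = N * φ D⁻¹ := by
    apply inv_eq_right_inv
    rw [← mul_assoc, hMN, ← _root_.map_mul φ, Matrix.mul_nonsing_inv _ hDdet, _root_.map_one φ]
  refine ⟨hUnit, ?_⟩
  have hre : (M⁻¹).map Complex.re = D⁻¹ := by
    rw [hMinv, hN, sub_mul, one_mul, smul_mul_assoc, hCc, hmap C, ← _root_.map_mul φ]
    set E := C * D⁻¹ with hE
    ext i j
    have h1 : ∀ (X : Matrix (Fin m) (Fin m) ℝ) (i j : Fin m), φ X i j = ((X i j : ℂ)) := by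
      intro X i j; rfl
    simp [Matrix.map_apply, Matrix.sub_apply, Matrix.smul_apply, h1,
      Complex.mul_re, Complex.I_re, Complex.I_im]
  rw [hre]
  exact hD.inv
end

section
/- Let C be a real symmetric m×m matrix (so that I + iC is invertible). Then C is positive semidefinite if and only if Im((I + iC)^{−1}) is negative semidefinite; likewise, C is positive definite if and only if Im((I + iC)^{−1}) is negative definite. -/
open Real Filter Matrix

/-- A real matrix is negative semidefinite iff its negation is positive semidefinite. -/
def NegSemidef {m : ℕ} (M : Matrix (Fin m) (Fin m) ℝ) : Prop :=
  (-M).PosSemidef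

/-- A real matrix is negative definite iff its negation is positive definite. -/
def NegDef {m : ℕ} (M : Matrix (Fin m) (Fin m) ℝ) : Prop :=
  (-M).PosDef

section MyHelpers

variable {m : ℕ}

variable {m : ℕ}

private lemma posDef_conj_helper {A : Matrix (Fin m) (Fin m) ℝ} (hA : A.PosDef)
    {B : Matrix (Fin m) (Fin m) ℝ} (hB : IsUnit B) :
    (Bᴴ * A * B).PosDef := by
  refine PosDef.of_dotProduct_mulVec_pos (isHermitian_conjTranspose_mul_mul B hA.1) fun x hx => ?_
  have hinj := Matrix.mulVec_injective_iff_isUnit.mpr hB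
  have hBx : B *ᵥ x ≠ 0 := fun h => hx (hinj (by simpa using h))
  simpa only [star_mulVec, dotProduct_mulVec, vecMul_vecMul] using hA.dotProduct_mulVec_pos hBx

private lemma unitary_conj_psd_iff {U : Matrix (Fin m) (Fin m) ℝ}
    (hU1 : U * Uᴴ = 1) (hU2 : Uᴴ * U = 1) (d : Fin m → ℝ) :
    (U * diagonal d * Uᴴ).PosSemidef ↔ ∀ i, 0 ≤ d i := by
  constructor
  · intro h
    have h2 := h.conjTranspose_mul_mul_same U
    have h3 : Uᴴ * (U * diagonal d * Uᴴ) * U = diagonal d := by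
      rw [show Uᴴ * (U * diagonal d * Uᴴ) * U = (Uᴴ * U) * diagonal d * (Uᴴ * U) by
        noncomm_ring, hU2]
      simp
    rw [h3] at h2
    exact posSemidef_diagonal_iff.mp h2
  · intro h
    exact (posSemidef_diagonal_iff.mpr h).mul_mul_conjTranspose_same U

private lemma unitary_conj_pd_iff {U : Matrix (Fin m) (Fin m) ℝ}
    (hU1 : U * Uᴴ = 1) (hU2 : Uᴴ * U = 1) (d : Fin m → ℝ) :
    (U * diagonal d * Uᴴ).PosDef ↔ ∀ i, 0 < d i := by
  have hUu : IsUnit U := Matrix.isUnit_iff_isUnit_det U |>.mpr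
    (IsUnit.of_mul_eq_one (Uᴴ.det) (by rw [← det_mul, hU1, det_one]))
  have hUu' : IsUnit (Uᴴ) := Matrix.isUnit_iff_isUnit_det Uᴴ |>.mpr
    (IsUnit.of_mul_eq_one (U.det) (by rw [← det_mul, hU2, det_one]))
  constructor
  · intro h
    have h2 := posDef_conj_helper h hUu
    have h3 : Uᴴ * (U * diagonal d * Uᴴ) * U = diagonal d := by
      rw [show Uᴴ * (U * diagonal d * Uᴴ) * U = (Uᴴ * U) * diagonal d * (Uᴴ * U) by
        noncomm_ring, hU2]
      simp
    rw [h3] at h2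
    exact posDef_diagonal_iff.mp h2
  · intro h
    have := posDef_conj_helper (Matrix.posDef_diagonal_iff.mpr h) hUu'
    rwa [conjTranspose_conjTranspose] at this

private lemma inv_one_add_I_mul (l : ℝ) :
    ((1 : ℂ) + Complex.I * l)⁻¹
      = ((1/(1+l^2) : ℝ) : ℂ) + Complex.I * ((-(l/(1+l^2)) : ℝ) : ℂ) := by
  have h1 : (1:ℝ) + l^2 ≠ 0 := by positivity
  rw [eq_comm]
  apply eq_inv_of_mul_eq_one_left
  simp only [Complex.ext_iff, Complex.add_re, Complex.add_im, Complex.mul_re, Complex.mul_im,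
    Complex.ofReal_re, Complex.ofReal_im, Complex.I_re, Complex.I_im, Complex.one_re,
    Complex.one_im]
  constructor <;> (field_simp; try ring)

private lemma one_add_I_mul_ne_zero (l : ℝ) : ((1 : ℂ) + Complex.I * l) ≠ 0 := by
  intro h
  have := congrArg Complex.re h
  simp [Complex.add_re, Complex.mul_re] at this

private lemma map_ofReal_add_I_smul_im (R S : Matrix (Fin m) (Fin m) ℝ) :
    ((R.map (fun a => (a:ℂ)) + Complex.I • S.map (fun a => (a:ℂ))).map Complex.im) = S := by
  ext i j
  simp [Matrix.map_apply, Matrix.add_apply, Matrix.smul_apply]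

end MyHelpers

/-- Let `C` be a real symmetric `m×m` matrix (so `I + iC` is invertible).  Then `C` is
positive semidefinite iff `Im((I + iC)⁻¹)` is negative semidefinite, and `C` is positive
definite iff `Im((I + iC)⁻¹)` is negative definite. -/
theorem im_inv_negSemidef (m : ℕ) (C : Matrix (Fin m) (Fin m) ℝ) (hC : C.IsSymm) :
    (C.PosSemidef ↔
      NegSemidef ((((1 : Matrix (Fin m) (Fin m) ℂ) +
        Complex.I • C.map (fun a => (a : ℂ)))⁻¹).map Complex.im)) ∧
    (C.PosDef ↔
      NegDef ((((1 : Matrix (Fin m) (Fin m) ℂ) +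
        Complex.I • C.map (fun a => (a : ℂ)))⁻¹).map Complex.im)) := by
  have hC' : C.IsHermitian := by
    rwa [Matrix.IsHermitian, conjTranspose_eq_transpose_of_trivial]
  set U : Matrix (Fin m) (Fin m) ℝ := (hC'.eigenvectorUnitary : Matrix (Fin m) (Fin m) ℝ)
    with hUdef
  set ev : Fin m → ℝ := hC'.eigenvalues with hevdef
  have hU1 : U * Uᴴ = 1 := Matrix.mem_unitaryGroup_iff.mp hC'.eigenvectorUnitary.2
  have hU2 : Uᴴ * U = 1 := Matrix.mem_unitaryGroup_iff'.mp hC'.eigenvectorUnitary.2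
  have hspec : C = U * diagonal ev * Uᴴ := by
    simpa [RCLike.ofReal_real_eq_id, Matrix.star_eq_conjTranspose] using hC'.spectral_theorem
  set f : ℝ → ℂ := fun a => (a : ℂ) with hfdef
  have hmapmul : ∀ A B : Matrix (Fin m) (Fin m) ℝ,
      (A * B).map f = A.map f * B.map f := fun A B =>
    Matrix.map_mul (f := Complex.ofRealHom)
  have hmapct : ∀ A : Matrix (Fin m) (Fin m) ℝ, (Aᴴ).map f = (A.map f)ᴴ := fun A =>
    Matrix.conjTranspose_map f (fun a => (Complex.conj_ofReal a).symm)
  have hmapone : (1 : Matrix (Fin m) (Fin m) ℝ).map f = 1 :=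
    Matrix.map_one f Complex.ofReal_zero Complex.ofReal_one
  set U' : Matrix (Fin m) (Fin m) ℂ := U.map f with hU'def
  have hU'1 : U' * U'ᴴ = 1 := by rw [hU'def, ← hmapct, ← hmapmul, hU1, hmapone]
  have hU'2 : U'ᴴ * U' = 1 := by rw [hU'def, ← hmapct, ← hmapmul, hU2, hmapone]
  have hdiagmap : ∀ d : Fin m → ℝ, (diagonal d).map f = diagonal (fun j => ((d j : ℂ))) :=
    fun d => Matrix.diagonal_map Complex.ofReal_zero
  have hconj : ∀ X Y : Matrix (Fin m) (Fin m) ℂ,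
      (U' * X * U'ᴴ) * (U' * Y * U'ᴴ) = U' * (X * Y) * U'ᴴ := by
    intro X Y
    calc (U' * X * U'ᴴ) * (U' * Y * U'ᴴ) = U' * X * (U'ᴴ * U') * (Y * U'ᴴ) := by noncomm_ring
    _ = U' * (X * Y) * U'ᴴ := by rw [hU'2]; noncomm_ring
  have hdistrib : ∀ r s : Fin m → ℝ,
      (U * diagonal r * Uᴴ).map f + Complex.I • (U * diagonal s * Uᴴ).map f
        = U' * diagonal (fun j => ((r j : ℂ)) + Complex.I * ((s j : ℂ))) * U'ᴴ := by
    intro r s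
    have h1 : ∀ d : Fin m → ℝ,
        (U * diagonal d * Uᴴ).map f = U' * diagonal (fun j => ((d j : ℂ))) * U'ᴴ := by
      intro d
      rw [hmapmul, hmapmul, hmapct, hdiagmap]
    have hdiagsum : (diagonal fun j => ((r j : ℂ)))
        + Complex.I • (diagonal fun j => ((s j : ℂ)))
        = diagonal (fun j => ((r j : ℂ)) + Complex.I * ((s j : ℂ))) := by
      rw [← diagonal_smul, diagonal_add]
      rfl
    rw [h1, h1]
    rw [show (Complex.I • (U' * (diagonal fun j => ((s j : ℂ))) * U'ᴴ))
        = U' * (Complex.I • diagonal fun j => ((s j : ℂ))) * U'ᴴ by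
      rw [Matrix.mul_smul, Matrix.smul_mul]]
    rw [← Matrix.add_mul, ← Matrix.mul_add, hdiagsum]
  have hMdiag : (1 : Matrix (Fin m) (Fin m) ℂ) + Complex.I • C.map f
      = U' * diagonal (fun j => 1 + Complex.I * ((ev j : ℂ))) * U'ᴴ := by
    have h0 : (1 : Matrix (Fin m) (Fin m) ℝ) = U * diagonal (fun _ => 1) * Uᴴ := by
      rw [diagonal_one, Matrix.mul_one, hU1]
    calc (1 : Matrix (Fin m) (Fin m) ℂ) + Complex.I • C.map f
        = (U * diagonal (fun _ => (1:ℝ)) * Uᴴ).map f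
            + Complex.I • (U * diagonal ev * Uᴴ).map f := by
          rw [← h0, ← hspec, hmapone]
    _ = U' * diagonal (fun j => (((1:ℝ) : ℂ)) + Complex.I * ((ev j : ℂ))) * U'ᴴ :=
          hdistrib _ _
    _ = U' * diagonal (fun j => 1 + Complex.I * ((ev j : ℂ))) * U'ᴴ := by push_cast; rfl
  set Rmat : Matrix (Fin m) (Fin m) ℝ :=
    U * diagonal (fun j => 1/(1 + ev j ^ 2)) * Uᴴ with hRdef
  set Smat : Matrix (Fin m) (Fin m) ℝ :=
    U * diagonal (fun j => -(ev j/(1 + ev j ^ 2))) * Uᴴ with hSdef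
  have hMinv : ((1 : Matrix (Fin m) (Fin m) ℂ) + Complex.I • C.map f)⁻¹
      = Rmat.map f + Complex.I • Smat.map f := by
    apply Matrix.inv_eq_right_inv
    rw [hMdiag, hRdef, hSdef, hdistrib, hconj, diagonal_mul_diagonal]
    have hone : (diagonal fun j => (1 + Complex.I * ((ev j : ℂ)))
        * (((1/(1 + ev j ^ 2) : ℝ) : ℂ) + Complex.I * ((-(ev j/(1 + ev j ^ 2)) : ℝ) : ℂ)))
        = (1 : Matrix (Fin m) (Fin m) ℂ) := by
      have hfun : (fun j => (1 + Complex.I * ((ev j : ℂ)))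
          * (((1/(1 + ev j ^ 2) : ℝ) : ℂ) + Complex.I * ((-(ev j/(1 + ev j ^ 2)) : ℝ) : ℂ)))
          = fun _ => (1 : ℂ) := by
        funext j
        rw [← inv_one_add_I_mul (ev j)]
        exact mul_inv_cancel₀ (one_add_I_mul_ne_zero (ev j))
      rw [hfun, diagonal_one]
    rw [hone, Matrix.mul_one, hU'1]
  have hIm : (((1 : Matrix (Fin m) (Fin m) ℂ) + Complex.I • C.map f)⁻¹).map Complex.im
      = Smat := by
    rw [hMinv, hfdef]
    exact map_ofReal_add_I_smul_im Rmat Smat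
  have hnegS : -Smat = U * diagonal (fun j => ev j/(1 + ev j ^ 2)) * Uᴴ := by
    rw [hSdef, ← Matrix.neg_mul, ← Matrix.mul_neg, diagonal_neg]
    simp only [neg_neg]
  have h1 : C.PosSemidef ↔ ∀ i, 0 ≤ ev i := by
    rw [hspec]; exact unitary_conj_psd_iff hU1 hU2 ev
  have h2 : C.PosDef ↔ ∀ i, 0 < ev i := by
    rw [hspec]; exact unitary_conj_pd_iff hU1 hU2 ev
  have h3 : NegSemidef Smat ↔ ∀ i, 0 ≤ ev i / (1 + ev i ^ 2) := by
    unfold NegSemidef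
    rw [hnegS]
    exact unitary_conj_psd_iff hU1 hU2 _
  have h4 : NegDef Smat ↔ ∀ i, 0 < ev i / (1 + ev i ^ 2) := by
    unfold NegDef
    rw [hnegS]
    exact unitary_conj_pd_iff hU1 hU2 _
  have h5 : ∀ l : ℝ, 0 ≤ l ↔ 0 ≤ l / (1 + l ^ 2) := by
    intro l
    have hp : (0:ℝ) < 1 + l ^ 2 := by positivity
    constructor
    · intro h; positivity
    · intro h
      have := mul_nonneg h hp.le
      rwa [div_mul_cancel₀ _ hp.ne'] at this
  have h6 : ∀ l : ℝ, 0 < l ↔ 0 < l / (1 + l ^ 2) := by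
    intro l
    have hp : (0:ℝ) < 1 + l ^ 2 := by positivity
    constructor
    · intro h; positivity
    · intro h
      have := mul_pos h hp
      rwa [div_mul_cancel₀ _ hp.ne'] at this
  rw [hIm]
  constructor
  · rw [h1, h3]
    exact forall_congr' fun i => h5 (ev i)
  · rw [h2, h4]
    exact forall_congr' fun i => h6 (ev i)
end

section
/- Let n ≥ 1 and c ∈ [nπ/2, (n+1)π/2). If A ∈ ℱ_c, i.e. A ∈ Sym(ℝ^{n+1}) with Θ̃(A) ≥ c, then a_00 ≥ 0. -/
open Real Filter Matrix

section AUX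
open Polynomial Matrix

variable {m : Type*} [Fintype m] [DecidableEq m]

lemma charpoly_card (M : Matrix m m ℂ) : M.charpoly.roots.card = Fintype.card m := by
  have h2 := Polynomial.Splits.natDegree_eq_card_roots
    (IsAlgClosed.splits M.charpoly)
  rw [← h2, Matrix.charpoly_natDegree_eq_dim]

lemma charpoly_prod (M : Matrix m m ℂ) :
    M.charpoly = (M.charpoly.roots.map fun a => X - C a).prod :=
  Polynomial.Splits.eq_prod_roots_of_monic
    (IsAlgClosed.splits _) M.charpoly_monic

lemma prod_map_neg_mul (s : Multiset ℂ) (f : ℂ → ℂ[X]) :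
    (s.map fun a => -(f a)).prod = (-1)^(Multiset.card s) * (s.map f).prod := by
  induction s using Multiset.induction with
  | empty => simp
  | cons a s ih =>
      simp only [Multiset.map_cons, Multiset.prod_cons, ih, Multiset.card_cons, pow_succ]
      ring

lemma prod_map_mul' (s : Multiset ℂ) (f g : ℂ → ℂ[X]) :
    (s.map fun a => f a * g a).prod = (s.map f).prod * (s.map g).prod := by
  induction s using Multiset.induction with
  | empty => simp
  | cons a s ih =>
      simp only [Multiset.map_cons, Multiset.prod_cons, ih]
      ring

lemma charpoly_map_ringhom (N : Matrix m m ℂ) (τ : ℂ[X] →+* ℂ[X])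
    (hτ : ∀ c : ℂ, τ (C c) = C c) :
    τ N.charpoly = (Matrix.scalar m (τ X) - N.map C).det := by
  rw [Matrix.charpoly, RingHom.map_det]
  congr 1
  ext i j
  by_cases h : i = j
  · subst h
    simp [Matrix.map_apply, charmatrix_apply, Matrix.scalar_apply, Matrix.diagonal_apply_eq,
      map_sub, hτ]
  · simp [Matrix.map_apply, charmatrix_apply, Matrix.scalar_apply, Matrix.diagonal_apply_ne _ h,
      map_sub, hτ]

lemma trace_sq_eq_sum_sq (M : Matrix m m ℂ) :
    (M * M).trace = (M.charpoly.roots.map fun r => r * r).sum := by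
  classical
  set σ : ℂ[X] →+* ℂ[X] := Polynomial.eval₂RingHom Polynomial.C ((X : ℂ[X])^2) with hσdef
  set σ' : ℂ[X] →+* ℂ[X] := Polynomial.eval₂RingHom Polynomial.C (-(X : ℂ[X])) with hσ'def
  have hσC : ∀ c : ℂ, σ (C c) = C c := fun c => by simp [hσdef]
  have hσ'C : ∀ c : ℂ, σ' (C c) = C c := fun c => by simp [hσ'def]
  have hσX : σ X = X^2 := by simp [hσdef]
  have hσ'X : σ' X = -X := by simp [hσ'def]
  have hσc : ∀ p : ℂ[X], σ p = p.comp ((X : ℂ[X])^2) := fun p => rfl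
  have hcomm : Commute (Matrix.scalar m (X : ℂ[X])) (M.map C) :=
    Matrix.scalar_commute _ (fun r => Commute.all _ _) _
  have hMchar : M.charpoly = (Matrix.scalar m (X : ℂ[X]) - M.map C).det := by
    rw [Matrix.charpoly]; rfl
  have key1 : σ ((M * M).charpoly) = M.charpoly * (Matrix.scalar m (X : ℂ[X]) + M.map C).det := by
    rw [charpoly_map_ringhom _ _ hσC, hσX]
    have hfac : Matrix.scalar m ((X : ℂ[X])^2) - (M * M).map C
        = (Matrix.scalar m (X : ℂ[X]) - M.map C) * (Matrix.scalar m (X : ℂ[X]) + M.map C) := by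
      have h1 : Matrix.scalar m ((X : ℂ[X])^2)
          = Matrix.scalar m (X : ℂ[X]) * Matrix.scalar m (X : ℂ[X]) := by
        rw [← _root_.map_mul, sq]
      have h2 : (M * M).map (C : ℂ →+* ℂ[X]).toFun = M.map C * M.map C := Matrix.map_mul (f := (C : ℂ →+* ℂ[X]))
      rw [h1]
      rw [show ((M * M).map (C : ℂ → ℂ[X])) = M.map C * M.map C from h2]
      rw [mul_add, sub_mul, sub_mul, hcomm.eq]
      abel
    rw [hfac, Matrix.det_mul, hMchar]
  have key2 : (Matrix.scalar m (X : ℂ[X]) + M.map C).det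
      = (M.charpoly.roots.map fun a => X + C a).prod := by
    have h1 : σ' (M.charpoly) = (Matrix.scalar m (-(X : ℂ[X])) - M.map C).det := by
      rw [charpoly_map_ringhom _ _ hσ'C, hσ'X]
    have h2 : Matrix.scalar m (-(X : ℂ[X])) - M.map C
        = -(Matrix.scalar m (X : ℂ[X]) + M.map C) := by
      rw [map_neg]; abel
    have h3 : σ' (M.charpoly)
        = (-1)^(Fintype.card m) * (Matrix.scalar m (X : ℂ[X]) + M.map C).det := by
      rw [h1, h2, Matrix.det_neg]
    have h4 : σ' (M.charpoly)
        = (-1)^(Fintype.card m) * (M.charpoly.roots.map fun a => X + C a).prod := by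
      conv_lhs => rw [charpoly_prod M]
      rw [map_multiset_prod, Multiset.map_map]
      have hfun : M.charpoly.roots.map (⇑σ' ∘ fun a => X - C a)
          = M.charpoly.roots.map fun a => -((X : ℂ[X]) + C a) :=
        Multiset.map_congr rfl (fun a _ => by
          simp only [Function.comp_apply, map_sub, hσ'X, hσ'C]; ring)
      rw [hfun, prod_map_neg_mul]
      rw [charpoly_card]
    have hne : ((-1 : ℂ[X]))^(Fintype.card m) ≠ 0 := by
      apply pow_ne_zero; intro h; simpa using congrArg (Polynomial.eval 0) h
    exact mul_left_cancel₀ hne (h3.symm.trans h4)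
  have hmm : M.charpoly.roots.map (⇑σ ∘ fun a => X - C (a * a))
      = M.charpoly.roots.map (fun a => ((X : ℂ[X]) - C a) * ((X : ℂ[X]) + C a)) :=
    Multiset.map_congr rfl (fun a _ => by
      rw [Function.comp_apply, map_sub, hσX, hσC, Polynomial.C_mul]; ring)
  have key3 : σ ((M * M).charpoly) = σ ((M.charpoly.roots.map fun a => X - C (a * a)).prod) := by
    have rhs : σ ((M.charpoly.roots.map fun a => X - C (a * a)).prod)
        = (M.charpoly.roots.map fun a => ((X : ℂ[X]) - C a) * ((X : ℂ[X]) + C a)).prod := by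
      rw [map_multiset_prod, Multiset.map_map, hmm]
    rw [key1, key2, rhs, prod_map_mul']
    congr 1
    exact charpoly_prod M
  have key4 : (M * M).charpoly = (M.charpoly.roots.map fun a => X - C (a * a)).prod := by
    have h0 : ((M * M).charpoly - (M.charpoly.roots.map fun a => X - C (a * a)).prod).comp
        ((X : ℂ[X])^2) = 0 := by
      rw [Polynomial.sub_comp, ← hσc, ← hσc, key3, sub_self]
    rcases (Polynomial.comp_eq_zero_iff).mp h0 with h | ⟨_, hC⟩
    · exact sub_eq_zero.mp h
    · exfalso
      have : ((X : ℂ[X])^2).coeff 0 = 0 := by simp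
      rw [this, map_zero] at hC
      exact pow_ne_zero 2 Polynomial.X_ne_zero hC
  have key5 : (M * M).charpoly.roots = M.charpoly.roots.map fun a => a * a := by
    have hcompo : (fun a : ℂ => (X : ℂ[X]) - C (a * a))
        = (fun b : ℂ => (X : ℂ[X]) - C b) ∘ (fun a : ℂ => a * a) := rfl
    rw [key4, hcompo, ← Multiset.map_map, Polynomial.roots_multiset_prod_X_sub_C]
  rw [Matrix.trace_eq_sum_roots_charpoly (M * M), key5]


lemma root_facts {n : ℕ} (A : Matrix (Fin (n+1)) (Fin (n+1)) ℝ) (hsym : A.IsSymm)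
    (t : ℂ) (ht : t ∈ (cmat A).charpoly.roots) :
    0 ≤ t.re ∧ t.re ≤ 1 ∧ (t.re = 0 → t.im = A 0 0) := by
  classical
  have hroot : (cmat A).charpoly.IsRoot t := (Polynomial.mem_roots'.mp ht).2
  have hdet : (Matrix.scalar (Fin (n+1)) t - cmat A).det = 0 := by
    have heq : (cmat A).charpoly.eval t = (Matrix.scalar (Fin (n+1)) t - cmat A).det := by
      rw [Matrix.charpoly, _root_.eval_det, matPolyEquiv_charmatrix]; simp
    rw [← heq]; exact hroot
  obtain ⟨v, hv0, hv⟩ := (Matrix.exists_mulVec_eq_zero_iff).2 hdet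
  have hMv : (cmat A).mulVec v = t • v := by
    rw [Matrix.sub_mulVec] at hv
    have h2 : (Matrix.scalar (Fin (n+1)) t).mulVec v = t • v := by
      ext i; simp [Matrix.mulVec_diagonal, Matrix.scalar_apply]
    rw [h2] at hv
    have h3 := sub_eq_zero.mp hv
    linear_combination -h3
  set N : ℝ := ∑ i, Complex.normSq (v i) with hN
  set S1 : ℝ := ∑ i, (if i = 0 then 0 else Complex.normSq (v i)) with hS1
  set a : ℂ := ∑ i, ∑ j, (starRingEnd ℂ) (v i) * ((A i j : ℂ) * v j) with ha
  have key : t * (N:ℂ) = (S1:ℂ) + Complex.I * a := by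
    have lhs : ∑ i, (starRingEnd ℂ) (v i) * ((cmat A).mulVec v i) = t * (N:ℂ) := by
      rw [hMv]
      simp only [Pi.smul_apply, smul_eq_mul, hN]
      push_cast
      rw [Finset.mul_sum]
      refine Finset.sum_congr rfl fun i _ => ?_
      rw [← Complex.mul_conj (v i)]
      ring
    have rhs : ∑ i, (starRingEnd ℂ) (v i) * ((cmat A).mulVec v i)
        = (S1:ℂ) + Complex.I * a := by
      have expand : ∀ i, (cmat A).mulVec v i
          = ∑ j, (Inmat n i j * v j + Complex.I * ((A i j : ℂ) * v j)) := by
        intro i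
        simp only [Matrix.mulVec, dotProduct, cmat, Matrix.add_apply,
          Matrix.smul_apply, Matrix.map_apply, smul_eq_mul]
        refine Finset.sum_congr rfl fun j _ => ?_
        ring
      have diagsum : ∀ i, (∑ j, (starRingEnd ℂ) (v i) * (Inmat n i j * v j))
          = (if i = 0 then (0:ℂ) else ((Complex.normSq (v i) : ℝ) : ℂ)) := by
        intro i
        rw [Finset.sum_eq_single i]
        · by_cases hi : i = 0
          · simp [Inmat, hi]
          · simp only [Inmat, Matrix.diagonal_apply_eq, if_neg hi, one_mul]
            rw [← Complex.mul_conj (v i)]; ring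
        · intro j _ hj
          simp [Inmat, Matrix.diagonal_apply_ne _ (Ne.symm hj)]
        · intro hi; exact absurd (Finset.mem_univ i) hi
      calc ∑ i, (starRingEnd ℂ) (v i) * ((cmat A).mulVec v i)
          = ∑ i, ((∑ j, (starRingEnd ℂ) (v i) * (Inmat n i j * v j))
              + Complex.I * ∑ j, (starRingEnd ℂ) (v i) * ((A i j : ℂ) * v j)) := by
            refine Finset.sum_congr rfl fun i _ => ?_
            rw [expand i, Finset.mul_sum, Finset.mul_sum, ← Finset.sum_add_distrib]
            refine Finset.sum_congr rfl fun j _ => ?_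
            ring
        _ = (S1:ℂ) + Complex.I * a := by
            rw [Finset.sum_add_distrib, ← Finset.mul_sum, ← ha]
            congr 1
            rw [hS1]
            push_cast [apply_ite (fun (x:ℝ) => (x:ℂ))]
            exact Finset.sum_congr rfl fun i _ => diagsum i
    rw [← lhs, rhs]
  have haR : a = ((a.re : ℝ) : ℂ) := by
    have hconj : (starRingEnd ℂ) a = a := by
      rw [ha, map_sum]
      have step1 : ∀ i ∈ Finset.univ, (starRingEnd ℂ) (∑ j, (starRingEnd ℂ) (v i) * ((A i j : ℂ) * v j))
          = ∑ j, v i * ((A i j : ℂ) * (starRingEnd ℂ) (v j)) := by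
        intro i _
        rw [map_sum]
        refine Finset.sum_congr rfl fun j _ => ?_
        simp only [_root_.map_mul, Complex.conj_conj, Complex.conj_ofReal]
      rw [Finset.sum_congr rfl step1, Finset.sum_comm]
      refine Finset.sum_congr rfl fun i _ => Finset.sum_congr rfl fun j _ => ?_
      have hAij : A i j = A j i := by
        have := congrFun (congrFun hsym i) j
        simpa [Matrix.transpose_apply] using this.symm
      rw [← hAij]
      ring
    exact ((Complex.conj_eq_iff_re).mp hconj).symm
  have hre : t.re * N = S1 := by
    have h := congrArg Complex.re key
    rw [haR] at h
    simpa using h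
  have him : t.im * N = a.re := by
    have h := congrArg Complex.im key
    rw [haR] at h
    simpa using h
  have hNpos : 0 < N := by
    rw [hN]
    obtain ⟨i, hi⟩ := Function.ne_iff.mp hv0
    exact Finset.sum_pos' (fun j _ => Complex.normSq_nonneg _)
      ⟨i, Finset.mem_univ i, Complex.normSq_pos.mpr hi⟩
  have hS1nonneg : 0 ≤ S1 := by
    rw [hS1]
    refine Finset.sum_nonneg fun i _ => ?_
    by_cases hi : i = 0 <;> simp [hi, Complex.normSq_nonneg]
  have hS1le : S1 ≤ N := by
    rw [hS1, hN]
    refine Finset.sum_le_sum fun i _ => ?_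
    by_cases hi : i = 0 <;> simp [hi, Complex.normSq_nonneg]
  refine ⟨by nlinarith, by nlinarith, fun htre => ?_⟩
  have hS10 : S1 = 0 := by rw [← hre, htre]; ring
  have hvz : ∀ i : Fin (n+1), i ≠ 0 → v i = 0 := by
    intro i hi
    have hall := (Finset.sum_eq_zero_iff_of_nonneg (fun j _ => by
      by_cases hj : (j : Fin (n+1)) = 0 <;> simp [hj, Complex.normSq_nonneg])).mp (hS1.symm ▸ hS10) i (Finset.mem_univ i)
    rw [if_neg hi] at hall
    exact Complex.normSq_eq_zero.mp hall
  have hv00 : v 0 ≠ 0 := by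
    intro h0
    apply hv0
    funext i
    by_cases hi : i = 0
    · rw [hi, h0]; rfl
    · rw [hvz i hi]; rfl
  have haval : a = (A 0 0 : ℂ) * ((Complex.normSq (v 0) : ℝ) : ℂ) := by
    rw [ha]
    rw [Finset.sum_eq_single (0 : Fin (n+1))]
    · rw [Finset.sum_eq_single (0 : Fin (n+1))]
      · rw [← Complex.mul_conj (v 0)]; ring
      · intro j _ hj; rw [hvz j hj]; ring
      · intro h0; exact absurd (Finset.mem_univ _) h0
    · intro i _ hi
      rw [hvz i hi]
      simp
    · intro h0; exact absurd (Finset.mem_univ _) h0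
  have hNval : N = Complex.normSq (v 0) := by
    rw [hN, Finset.sum_eq_single (0 : Fin (n+1))]
    · intro i _ hi; rw [hvz i hi]; simp
    · intro h0; exact absurd (Finset.mem_univ _) h0
  have hare : a.re = A 0 0 * Complex.normSq (v 0) := by
    rw [haval]; simp
  rw [hNval, hare] at him
  have hnsq : Complex.normSq (v 0) ≠ 0 := fun h => hv00 (Complex.normSq_eq_zero.mp h)
  have := mul_right_cancel₀ hnsq him
  exact this


end AUX

/-- Let `n ≥ 1` and `c ∈ [nπ/2, (n+1)π/2)`.  If `A ∈ ℱ_c`, i.e. `A ∈ Sym(ℝ^{n+1})` with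
`Θ̃(A) ≥ c`, then `a₀₀ ≥ 0`. -/
theorem a00_nonneg (n : ℕ) (hn : 1 ≤ n) (c : ℝ)
    (hc : (n : ℝ) * π / 2 ≤ c) (hc' : c < ((n : ℝ) + 1) * π / 2)
    (A : Matrix (Fin (n+1)) (Fin (n+1)) ℝ) (hA : A ∈ calF n c) :
    0 ≤ A 0 0 := by
  classical
  by_contra hneg
  push_neg at hneg
  obtain ⟨hsym, hΘ⟩ := hA
  set S := (cmat A).charpoly.roots with hS
  have hfacts : ∀ z ∈ S, 0 ≤ z.re ∧ z.re ≤ 1 ∧ (z.re = 0 → z.im = A 0 0) :=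
    fun z hz => root_facts A hsym z hz
  have hcard : Multiset.card S = n + 1 := by
    rw [hS, charpoly_card]; simp
  -- determinant nonzero
  have hdet : (cmat A).det ≠ 0 := by
    intro h0
    rw [Matrix.det_eq_prod_roots_charpoly] at h0
    have h0' : (0:ℂ) ∈ S := by rw [hS]; exact Multiset.prod_eq_zero_iff.mp h0
    have hz := (hfacts 0 h0').2.2 (by simp)
    rw [Complex.zero_im] at hz
    linarith
  have hΘeq : spaceTimeAngle A = (S.map Complex.arg).sum := by
    rw [spaceTimeAngle, if_neg hdet]
  -- arg bounds
  have harg2 : ∀ z ∈ S, Complex.arg z ≤ π / 2 := by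
    intro z hz
    exact (abs_le.mp (Complex.abs_arg_le_pi_div_two_iff.mpr (hfacts z hz).1)).2
  have hargnn : ∀ z ∈ S, 0 ≤ Complex.arg z := by
    by_contra hbad
    push_neg at hbad
    obtain ⟨z0, hz0S, hz0⟩ := hbad
    have hsplit : S = z0 ::ₘ S.erase z0 := (Multiset.cons_erase hz0S).symm
    have hrest : ((S.erase z0).map Complex.arg).sum ≤ (n : ℝ) * (π / 2) := by
      have hb := Multiset.sum_le_card_nsmul ((S.erase z0).map Complex.arg) (π/2) ?_
      · rw [Multiset.card_map, Multiset.card_erase_of_mem hz0S, hcard] at hb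
        simpa [nsmul_eq_mul] using hb
      · intro x hx
        obtain ⟨z, hz, rfl⟩ := Multiset.mem_map.mp hx
        exact harg2 z (Multiset.mem_of_mem_erase hz)
    have hsum : (S.map Complex.arg).sum = Complex.arg z0 + ((S.erase z0).map Complex.arg).sum := by
      conv_lhs => rw [hsplit]
      rw [Multiset.map_cons, Multiset.sum_cons]
    rw [hΘeq, hsum] at hΘ
    have : (n:ℝ) * π / 2 ≤ Complex.arg z0 + (n:ℝ) * (π/2) := by linarith
    linarith
  -- all roots have nonnegative imaginary part
  have him : ∀ z ∈ S, 0 ≤ z.im := fun z hz => Complex.arg_nonneg_iff.mp (hargnn z hz)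
  -- trace identities
  have hmapim : ∀ (T : Multiset ℂ), (T.map Complex.im).sum = T.sum.im := by
    intro T
    rw [← Complex.coe_imAddGroupHom, ← map_multiset_sum]
  have hsum1 : ((S.map Complex.im)).sum = ∑ i, A i i := by
    rw [hmapim, hS, ← Matrix.trace_eq_sum_roots_charpoly (cmat A), Matrix.trace, Complex.im_sum]
    refine Finset.sum_congr rfl fun i _ => ?_
    by_cases hi : i = 0 <;>
      simp [Matrix.diag_apply, cmat, Inmat, hi]
  have hsum2 : ((S.map (fun z => (z * z).im))).sum = ∑ i, (if i = (0: Fin (n+1)) then (0:ℝ) else 2 * A i i) := by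
    have hmm2 : S.map (fun z => (z * z).im) = (S.map (fun r => r * r)).map Complex.im := by
      rw [Multiset.map_map]; rfl
    rw [hmm2, hmapim, hS, ← trace_sq_eq_sum_sq (cmat A), Matrix.trace, Complex.im_sum]
    refine Finset.sum_congr rfl fun i _ => ?_
    rw [Matrix.diag_apply, Matrix.mul_apply, Complex.im_sum]
    rw [Finset.sum_eq_single i]
    · by_cases hi : i = 0
      · simp [cmat, Inmat, hi, Complex.mul_im]
      · simp [cmat, Inmat, hi, Complex.mul_im]; ring
    · intro j _ hj
      simp [cmat, Inmat, Matrix.diagonal_apply_ne, hj, Ne.symm hj, Complex.mul_im,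
        Matrix.diagonal_apply]
    · intro h; exact absurd (Finset.mem_univ i) h
  -- final contradiction
  have hkey : (S.map (fun z => z.im * (1 - z.re))).sum = A 0 0 := by
    have hfun : S.map (fun z => z.im * (1 - z.re))
        = S.map (fun z => z.im - (z * z).im / 2) := by
      refine Multiset.map_congr rfl fun z _ => ?_
      rw [Complex.mul_im]
      ring
    have hsub : (S.map (fun z => z.im - (z * z).im / 2)).sum
        = (S.map Complex.im).sum - (S.map (fun z => (z * z).im)).sum / 2 := by
      induction S using Multiset.induction with
      | empty => simp
      | cons a s ih => simp only [Multiset.map_cons, Multiset.sum_cons, ih]; ring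
    have h2 : (∑ i, (if i = (0:Fin (n+1)) then (0:ℝ) else 2 * A i i))
        = (∑ i, 2 * A i i) - 2 * A 0 0 := by
      have hterm : ∀ i : Fin (n+1), (if i = (0:Fin (n+1)) then (0:ℝ) else 2 * A i i)
          = 2 * A i i - (if i = (0:Fin (n+1)) then 2 * A i i else 0) := by
        intro i; by_cases hi : i = 0 <;> simp [hi]
      rw [Finset.sum_congr rfl (fun i _ => hterm i), Finset.sum_sub_distrib,
        Finset.sum_ite_eq' Finset.univ (0 : Fin (n+1)) (fun i => 2 * A i i)]
      simp
    rw [hfun, hsub, hsum1, hsum2, h2, ← Finset.mul_sum]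
    ring
  have hpos : 0 ≤ (S.map (fun z => z.im * (1 - z.re))).sum := by
    refine Multiset.sum_nonneg fun x hx => ?_
    obtain ⟨z, hz, rfl⟩ := Multiset.mem_map.mp hx
    have h1 := him z hz
    have h2 := (hfacts z hz).2.1
    nlinarith
  rw [hkey] at hpos
  linarith
end

section
/- Partial convexity: Let D ⊂ ℝⁿ be a bounded domain, I ⊂ ℝ an open interval, and c ∈ [nπ/2, (n+1)π/2). If u ∈ ℱ_c(I × D), then for every x ∈ D the function t ↦ u(t, x) is convex on I. -/
open Real Filter Matrix

section PCAux
open Polynomial Topology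
set_option maxHeartbeats 1000000

/-! ### Auxiliary lemmas for `partial_convexity` -/

lemma pc_charpoly_diag {m : ℕ} (d : Fin m → ℂ) :
    (Matrix.diagonal d).charpoly = ∏ i, (X - C (d i)) := by
  rw [Matrix.charpoly, Matrix.charmatrix]
  have : Matrix.scalar (Fin m) (X : ℂ[X]) - (C : ℂ →+* ℂ[X]).mapMatrix (Matrix.diagonal d)
      = Matrix.diagonal (fun i => X - C (d i)) := by
    ext i j
    by_cases h : i = j
    · subst h; simp
    · simp [Matrix.scalar, Matrix.diagonal_apply_ne _ h]
  rw [this, Matrix.det_diagonal]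

lemma pc_roots_charpoly_diag {m : ℕ} (d : Fin m → ℂ) :
    (Matrix.diagonal d).charpoly.roots = (Finset.univ.val.map d) := by
  rw [pc_charpoly_diag]
  have : ∏ i, (X - C (d i)) = ((Finset.univ.val.map d).map (fun a => X - C a)).prod := by
    rw [Multiset.map_map, Finset.prod]; rfl
  rw [this, Polynomial.roots_multiset_prod_X_sub_C]

lemma pc_cmat_diagonal {n : ℕ} (d : Fin (n+1) → ℝ) :
    cmat (Matrix.diagonal d)
      = Matrix.diagonal (fun i => (if i = 0 then 0 else 1) + Complex.I * d i) := by
  rw [cmat, Inmat, Matrix.diagonal_map (by simp), ← Matrix.diagonal_smul,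
    ← Matrix.diagonal_add]
  rfl

lemma pc_not_mem_calF {n : ℕ} {c C s : ℝ} (hs : 0 < s)
    (hc : (n : ℝ) * π / 2 ≤ c) :
    Matrix.diagonal (fun i : Fin (n+1) => if i = 0 then -s else 2*C) ∉ calF n c := by
  intro ⟨_, hangle⟩
  set d : Fin (n+1) → ℝ := fun i => if i = 0 then -s else 2*C with hd
  have hcm : cmat (Matrix.diagonal d)
      = Matrix.diagonal (fun i => (if i = 0 then 0 else 1) + Complex.I * d i) :=
    pc_cmat_diagonal d
  have hdet : (cmat (Matrix.diagonal d)).det ≠ 0 := by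
    rw [hcm, Matrix.det_diagonal]
    refine Finset.prod_ne_zero_iff.2 fun i _ => ?_
    by_cases h : i = 0
    · simp only [h, if_pos rfl, hd]
      intro hz
      have : (-s : ℝ) = 0 := by
        have := congrArg Complex.im hz
        simpa using this
      linarith
    · simp only [if_neg h, hd]
      intro hz
      have := congrArg Complex.re hz
      simp at this
  have hangle' : spaceTimeAngle (Matrix.diagonal d)
      = ∑ i, Complex.arg ((if i = 0 then 0 else 1) + Complex.I * d i) := by
    rw [spaceTimeAngle, if_neg hdet, hcm, pc_roots_charpoly_diag, Multiset.map_map]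
    rfl
  have h0 : Complex.arg ((if (0:Fin (n+1)) = 0 then (0:ℂ) else 1) + Complex.I * d 0)
      = -(π/2) := by
    rw [Complex.arg_eq_neg_pi_div_two_iff]
    constructor <;> simp [hd, hs, hs.le]
  have hrest : ∀ j : Fin n,
      Complex.arg ((if (j.succ : Fin (n+1)) = 0 then (0:ℂ) else 1) + Complex.I * d j.succ)
        < π/2 := by
    intro j
    rw [Complex.arg_lt_pi_div_two_iff]
    left
    simp [hd, Fin.succ_ne_zero]
  have hsum : spaceTimeAngle (Matrix.diagonal d) ≤ -(π/2) + n * (π/2) := by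
    rw [hangle', Fin.sum_univ_succ, h0]
    have hb : ∑ j : Fin n, Complex.arg ((if (j.succ : Fin (n+1)) = 0 then (0:ℂ) else 1)
        + Complex.I * d j.succ) ≤ (Finset.univ : Finset (Fin n)).card • (π/2) :=
      Finset.sum_le_card_nsmul _ _ _ (fun j _ => (hrest j).le)
    simp only [Finset.card_univ, Fintype.card_fin, nsmul_eq_mul] at hb
    linarith
  have := hangle.trans hsum
  have hpi := Real.pi_pos
  linarith

lemma pc_diag_mem_dualSub {n : ℕ} {c C : ℝ} (hc : (n : ℝ) * π / 2 ≤ c) :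
    Matrix.diagonal (fun i : Fin (n+1) => if i = 0 then 0 else -(2*C))
      ∈ dualSub (calF n c) := by
  refine ⟨Matrix.isSymm_diagonal _, ?_⟩
  rintro ⟨-, hev⟩
  set f : ℝ → Matrix (Fin (n+1)) (Fin (n+1)) ℝ :=
    fun s => Matrix.diagonal (fun i : Fin (n+1) => if i = 0 then -s else 2*C) with hf
  have hneg : -Matrix.diagonal (fun i : Fin (n+1) => if i = 0 then 0 else -(2*C)) = f 0 := by
    rw [hf]
    ext i j
    by_cases h : i = j
    · subst h
      by_cases h0 : i = 0 <;> simp [Matrix.diagonal_apply_eq, h0]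
    · simp [Matrix.diagonal_apply_ne _ h]
  have hcont : ContinuousAt f 0 := by
    refine Continuous.continuousAt (Continuous.matrix_diagonal ?_)
    refine continuous_pi fun i => ?_
    by_cases h : i = 0 <;> simp [h] <;> fun_prop
  rw [hneg] at hev
  have hev2 : ∀ᶠ s in nhds (0:ℝ), (f s).IsSymm → f s ∈ calF n c := hcont.eventually hev
  have hev3 : ∀ᶠ s in nhdsWithin (0:ℝ) (Set.Ioi 0),
      ((f s).IsSymm → f s ∈ calF n c) ∧ s ∈ Set.Ioi 0 :=
    (hev2.filter_mono nhdsWithin_le_nhds).and eventually_mem_nhdsWithin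
  obtain ⟨s, hmem, hs⟩ := hev3.exists
  exact pc_not_mem_calF hs hc (hmem (Matrix.isSymm_diagonal _))

/-- coordinate projection as a continuous linear map -/
noncomputable abbrev pcP {n : ℕ} (i : Fin (n+1)) : ((Fin (n+1) → ℝ)) →L[ℝ] ℝ :=
  ContinuousLinearMap.proj i

/-- The test function: affine in `t`, concave quadratic in `x`. -/
noncomputable def pcQuad {n : ℕ} (α m C : ℝ) (w : Fin n → ℝ) (y : Fin (n+1) → ℝ) : ℝ :=
  α - m * y 0 - C * ∑ j : Fin n, (y j.succ - w j)^2

lemma pc_contDiff_quad {n : ℕ} (α m C : ℝ) (w : Fin n → ℝ) :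
    ContDiff ℝ 2 (pcQuad α m C w) := by
  unfold pcQuad
  refine ContDiff.sub (contDiff_const.sub (contDiff_const.mul ?_)) (contDiff_const.mul ?_)
  · exact (ContinuousLinearMap.proj (R := ℝ) (φ := fun _ : Fin (n+1) => ℝ) 0).contDiff
  · refine ContDiff.sum fun j _ => ?_
    exact ((ContinuousLinearMap.proj (R := ℝ) (φ := fun _ : Fin (n+1) => ℝ) j.succ).contDiff.sub
      contDiff_const).pow 2

noncomputable def pcPhi {n : ℕ} (C : ℝ) :
    ((Fin (n+1) → ℝ)) →L[ℝ] ((Fin (n+1) → ℝ)) →L[ℝ] ℝ :=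
  ∑ j : Fin n, (((-(2*C)) • pcP (n := n) j.succ).smulRight (pcP (n := n) j.succ))

noncomputable def pcA0 {n : ℕ} (m C : ℝ) (w : Fin n → ℝ) : ((Fin (n+1) → ℝ)) →L[ℝ] ℝ :=
  (-m) • pcP (n := n) 0 + ∑ j : Fin n, ((2*C) * w j) • pcP (n := n) j.succ

lemma pc_quad_fderiv {n : ℕ} (α m C : ℝ) (w : Fin n → ℝ) (y : Fin (n+1) → ℝ) :
    HasFDerivAt (pcQuad α m C w) (pcA0 m C w + pcPhi C y) y := by
  have h1 : ∀ j : Fin n, HasFDerivAt (fun y : Fin (n+1) → ℝ => (y j.succ - w j)^2)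
      ((2 * (y j.succ - w j)) • pcP (n := n) j.succ) y := by
    intro j
    have hb : HasFDerivAt (fun y : Fin (n+1) → ℝ => y j.succ - w j) (pcP (n := n) j.succ) y := by
      have := (pcP (n := n) j.succ).hasFDerivAt (x := y)
      exact this.sub_const (w j)
    have := (hb.fun_mul hb)
    refine (this.congr_of_eventuallyEq (Filter.Eventually.of_forall fun z => ?_)).congr_fderiv (Eq.symm ?_)
    · ring
    · ext u
      simp [ContinuousLinearMap.smul_apply, smul_eq_mul]
      ring
  have h2 : HasFDerivAt (fun y : Fin (n+1) → ℝ => ∑ j : Fin n, (y j.succ - w j)^2)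
      (∑ j : Fin n, (2 * (y j.succ - w j)) • pcP (n := n) j.succ) y :=
    HasFDerivAt.fun_sum fun j _ => h1 j
  have h3 : HasFDerivAt (fun y : Fin (n+1) → ℝ => y 0) (pcP (n := n) 0) y :=
    (pcP (n := n) 0).hasFDerivAt (x := y)
  have h4 := ((hasFDerivAt_const α y).fun_sub (h3.const_mul m)).fun_sub (h2.const_mul C)
  refine h4.congr_fderiv (Eq.symm ?_)
  ext u
  simp [pcA0, pcPhi, ContinuousLinearMap.sum_apply, ContinuousLinearMap.smul_apply,
    ContinuousLinearMap.smulRight_apply, Finset.mul_sum, Finset.sum_add_distrib,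
    smul_eq_mul]
  rw [add_assoc, ← Finset.sum_neg_distrib, ← Finset.sum_add_distrib, sub_eq_add_neg,
    ← Finset.sum_neg_distrib]
  congr 1
  refine Finset.sum_congr rfl fun j _ => ?_
  ring

lemma pc_quad_hessian {n : ℕ} (α m C : ℝ) (w : Fin n → ℝ) (x : Fin (n+1) → ℝ) :
    hessianMatrix (pcQuad α m C w) x
      = Matrix.diagonal (fun i : Fin (n+1) => if i = 0 then 0 else -(2*C)) := by
  have hfd : fderiv ℝ (pcQuad α m C w) = fun y => pcA0 m C w + pcPhi C y :=
    funext fun y => (pc_quad_fderiv α m C w y).fderiv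
  have h2 : HasFDerivAt (fun y : Fin (n+1) → ℝ => pcA0 m C w + pcPhi C y)
      (pcPhi (n := n) C) x :=
    ((pcPhi (n := n) C).hasFDerivAt (x := x)).const_add (pcA0 m C w)
  have hkey : fderiv ℝ (fderiv ℝ (pcQuad α m C w)) x = pcPhi (n := n) C := by
    rw [hfd]; exact h2.fderiv
  ext i j
  rw [hessianMatrix]
  show iteratedFDeriv ℝ 2 (pcQuad α m C w) x ![Pi.single i 1, Pi.single j 1] = _
  rw [iteratedFDeriv_two_apply, hkey]
  simp only [Matrix.cons_val_zero, Matrix.cons_val_one, Matrix.head_cons]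
  rw [pcPhi]
  simp only [ContinuousLinearMap.sum_apply, ContinuousLinearMap.coe_smul', Pi.smul_apply,
    ContinuousLinearMap.smulRight_apply, ContinuousLinearMap.proj_apply,
    ContinuousLinearMap.smul_apply, smul_eq_mul, Pi.single_apply]
  rcases Fin.eq_zero_or_eq_succ i with hi | ⟨k, rfl⟩
  · subst hi
    simp [Fin.succ_ne_zero, Matrix.diagonal_apply]
  · rw [Finset.sum_eq_single k]
    · by_cases h : k.succ = j
      · subst h; simp [Matrix.diagonal_apply, Fin.succ_ne_zero]
      · simp [h, Matrix.diagonal_apply]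
    · intro b _ hb
      simp [Fin.succ_inj, hb]
    · intro h; exact absurd (Finset.mem_univ k) h

lemma pc_usc_bound {m : ℕ} {U K : Set (Fin m → ℝ)} {u : (Fin m → ℝ) → EReal}
    (hU : IsOpen U) (husc : UpperSemicontinuousOn u U) (hne : ∀ x ∈ U, u x ≠ ⊤)
    (hK : IsCompact K) (hKU : K ⊆ U) : ∃ M : ℝ, ∀ y ∈ K, u y ≤ (M : EReal) := by
  have h : ∀ z ∈ K, ∃ r : ℝ, {y | u y < (r : EReal)} ∈ nhds z := by
    intro z hz
    obtain ⟨r, hr1, -⟩ := EReal.exists_between_coe_real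
      (lt_top_iff_ne_top.2 (hne z (hKU hz)))
    refine ⟨r, ?_⟩
    have := husc z (hKU hz) (r : EReal) hr1
    rwa [nhdsWithin_eq_nhds.2 (hU.mem_nhds (hKU hz))] at this
  choose! r hr using h
  obtain ⟨t, htK, hcov⟩ := hK.elim_nhds_subcover (fun z => {y | u y < (r z : EReal)}) hr
  rcases t.eq_empty_or_nonempty with rfl | hte
  · exact ⟨0, fun y hy => absurd (hcov hy) (by simp)⟩
  · refine ⟨t.sup' hte r, fun y hy => ?_⟩
    obtain ⟨z, hzt, hyz⟩ := Set.mem_iUnion₂.1 (hcov hy)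
    exact le_trans (le_of_lt hyz) (EReal.coe_le_coe_iff.2 (Finset.le_sup' r hzt))

lemma pc_dist_cons {n : ℕ} (t : ℝ) (x x' : Fin n → ℝ) :
    dist (Fin.cons t x : Fin (n+1) → ℝ) (Fin.cons t x') ≤ dist x x' := by
  rw [dist_pi_le_iff dist_nonneg]
  intro i
  induction i using Fin.cases with
  | zero => simpa using dist_nonneg
  | succ j => simpa using dist_le_pi_dist x x' j

lemma pc_open_box {n : ℕ} {S : Set ℝ} {T : Set (Fin n → ℝ)} (hS : IsOpen S)
    (hT : IsOpen T) : IsOpen {y : Fin (n+1) → ℝ | y 0 ∈ S ∧ Fin.tail y ∈ T} :=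
  (hS.preimage (continuous_apply 0)).inter
    (hT.preimage (continuous_pi fun j => continuous_apply j.succ))

set_option maxHeartbeats 1000000 in
lemma pc_key {n : ℕ} {c : ℝ} (hc : (n : ℝ) * π / 2 ≤ c)
    {I : Set ℝ} (hIopen : IsOpen I) (hIconv : Convex ℝ I)
    {D : Set (Fin n → ℝ)} (hDopen : IsOpen D)
    {u : (Fin (n+1) → ℝ) → EReal}
    (hu : IsTypeF (calF n c) {y | y 0 ∈ I ∧ Fin.tail y ∈ D} u)
    {x₀ : Fin n → ℝ} (hx₀ : x₀ ∈ D) {t₁ t₂ : ℝ} (ht₁ : t₁ ∈ I) (ht₂ : t₂ ∈ I)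
    (h12 : t₁ ≤ t₂) {p q a b : ℝ} (hp : u (Fin.cons t₁ x₀) ≤ ((p : ℝ) : EReal))
    (hq : u (Fin.cons t₂ x₀) ≤ ((q : ℝ) : EReal)) (ha : 0 ≤ a) (hb : 0 ≤ b)
    (hab : a + b = 1) :
    u (Fin.cons (a*t₁+b*t₂) x₀) ≤ ((a*p+b*q : ℝ) : EReal) := by
  obtain ⟨hne_top, husc, hsub⟩ := hu
  set U : Set (Fin (n+1) → ℝ) := {y | y 0 ∈ I ∧ Fin.tail y ∈ D} with hU
  have hUopen : IsOpen U := by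
    rw [hU]
    exact pc_open_box hIopen hDopen
  have hIcc : Set.Icc t₁ t₂ ⊆ I := hIconv.ordConnected.out ht₁ ht₂
  -- trivial case
  rcases eq_or_lt_of_le h12 with rfl | hlt
  · have ht' : a*t₁+b*t₁ = t₁ := by linear_combination t₁ * hab
    rw [ht']
    have hmin : u (Fin.cons t₁ x₀) ≤ ((min p q : ℝ) : EReal) := by
      rcases le_total p q with h | h
      · rwa [min_eq_left h]
      · rwa [min_eq_right h]
    refine hmin.trans (EReal.coe_le_coe_iff.2 ?_)
    have e : a * min p q + b * min p q = min p q := by linear_combination (min p q) * hab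
    have e1 := mul_le_mul_of_nonneg_left (min_le_left p q) ha
    have e2 := mul_le_mul_of_nonneg_left (min_le_right p q) hb
    linarith
  -- main case : t₁ < t₂
  set tm : ℝ := a*t₁+b*t₂ with htm
  have htmIcc : tm ∈ Set.Icc t₁ t₂ := by
    have e1 : a*t₁+b*t₂ - t₁ = b*(t₂-t₁) := by linear_combination t₁*hab
    have e2 : t₂ - (a*t₁+b*t₂) = a*(t₂-t₁) := by linear_combination (-t₂)*hab
    have e3 : (0:ℝ) ≤ t₂ - t₁ := by linarith
    constructor
    · have := mul_nonneg hb e3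
      rw [htm]; linarith
    · have := mul_nonneg ha e3
      rw [htm]; linarith
  set m : ℝ := (q - p)/(t₂ - t₁) with hmdef
  have hm : m * (t₂ - t₁) = q - p := by
    rw [hmdef]
    exact div_mul_cancel₀ _ (sub_ne_zero.2 (ne_of_gt hlt))
  set z₁ : Fin (n+1) → ℝ := Fin.cons t₁ x₀ with hz₁
  set z₂ : Fin (n+1) → ℝ := Fin.cons t₂ x₀ with hz₂
  set zm : Fin (n+1) → ℝ := Fin.cons tm x₀ with hzm
  have hz₁U : z₁ ∈ U := by
    rw [hU]; constructor
    · rw [hz₁]; simpa using ht₁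
    · rw [hz₁]; simpa [Fin.tail_cons] using hx₀
  have hz₂U : z₂ ∈ U := by
    rw [hU]; constructor
    · rw [hz₂]; simpa using ht₂
    · rw [hz₂]; simpa [Fin.tail_cons] using hx₀
  -- the affine comparison value at tm
  have hltm : p + m * (tm - t₁) = a*p+b*q := by
    have h1 : tm - t₁ = b * (t₂ - t₁) := by
      rw [htm]; linear_combination t₁ * hab
    have h2 : m * (tm - t₁) = b * (q - p) := by
      rw [h1]; linear_combination b * hm
    linear_combination h2 - p * hab
  have hllb : ∀ t ∈ Set.Icc t₁ t₂, min p q ≤ p + m * (t - t₁) := by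
    rintro t ⟨ht1, ht2⟩
    rcases le_total 0 m with hm0 | hm0
    · have := min_le_left p q
      nlinarith [mul_nonneg hm0 (sub_nonneg.2 ht1)]
    · have := min_le_right p q
      nlinarith [mul_nonneg (neg_nonneg.2 hm0) (sub_nonneg.2 ht2)]
  -- it suffices to prove the bound with a margin δ
  suffices hdel : ∀ δ : ℝ, 0 < δ → u zm ≤ ((a*p+b*q+δ : ℝ) : EReal) by
    by_contra hcon
    rw [not_le] at hcon
    obtain ⟨y, hy1, hy2⟩ := EReal.exists_between_coe_real hcon
    have hδ : 0 < y - (a*p+b*q) := by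
      rw [sub_pos]
      exact_mod_cast hy1
    have := hdel _ hδ
    rw [show a*p+b*q+(y-(a*p+b*q)) = y by ring] at this
    exact absurd (lt_of_le_of_lt this hy2) (lt_irrefl _)
  intro δ hδ
  -- choose the radius r
  obtain ⟨ε, hε, hεD⟩ := Metric.isOpen_iff.1 hDopen x₀ hx₀
  set r : ℝ := ε/2 with hrdef
  have hr : 0 < r := by positivity
  have hrD : Metric.closedBall x₀ r ⊆ D :=
    (Metric.closedBall_subset_ball (by rw [hrdef]; linarith)).trans hεD
  -- the compact box K
  set K : Set (Fin (n+1) → ℝ) :=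
    (fun pr : ℝ × (Fin n → ℝ) => Fin.cons pr.1 pr.2) ''
      (Set.Icc t₁ t₂ ×ˢ Metric.closedBall x₀ r) with hKdef
  have hcons_cont : Continuous
      (fun pr : ℝ × (Fin n → ℝ) => (Fin.cons pr.1 pr.2 : Fin (n+1) → ℝ)) := by
    refine continuous_pi fun i => ?_
    induction i using Fin.cases with
    | zero => simpa using continuous_fst
    | succ j => simpa [Function.comp_def] using (continuous_apply j).comp continuous_snd
  have hKc : IsCompact K :=
    (isCompact_Icc.prod (isCompact_closedBall _ _)).image hcons_cont
  have hKmem : ∀ y : Fin (n+1) → ℝ,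
      y ∈ K ↔ (y 0 ∈ Set.Icc t₁ t₂ ∧ Fin.tail y ∈ Metric.closedBall x₀ r) := by
    intro y
    constructor
    · rintro ⟨⟨s, x⟩, ⟨hs, hx⟩, rfl⟩
      refine ⟨by simpa using hs, by simpa [Fin.tail_cons] using hx⟩
    · rintro ⟨h1, h2⟩
      exact ⟨(y 0, Fin.tail y), ⟨h1, h2⟩, Fin.cons_self_tail y⟩
  have hKU : K ⊆ U := by
    intro y hy
    rw [hKmem] at hy
    exact ⟨hIcc hy.1, hrD hy.2⟩
  -- upper bound of u on K
  obtain ⟨M, hM⟩ := pc_usc_bound hUopen husc hne_top hKc hKU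
  -- upper semicontinuity at the two endpoints
  have husc1 : ∃ ε₁ > 0, ∀ ⦃y⦄, dist y z₁ < ε₁ → u y < ((p + δ : ℝ) : EReal) := by
    have h1 : u z₁ < ((p + δ : ℝ) : EReal) :=
      lt_of_le_of_lt hp (EReal.coe_lt_coe_iff.2 (by linarith))
    have := husc z₁ hz₁U _ h1
    rw [nhdsWithin_eq_nhds.2 (hUopen.mem_nhds hz₁U)] at this
    exact Metric.eventually_nhds_iff.1 this
  have husc2 : ∃ ε₂ > 0, ∀ ⦃y⦄, dist y z₂ < ε₂ → u y < ((q + δ : ℝ) : EReal) := by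
    have h1 : u z₂ < ((q + δ : ℝ) : EReal) :=
      lt_of_le_of_lt hq (EReal.coe_lt_coe_iff.2 (by linarith))
    have := husc z₂ hz₂U _ h1
    rw [nhdsWithin_eq_nhds.2 (hUopen.mem_nhds hz₂U)] at this
    exact Metric.eventually_nhds_iff.1 this
  obtain ⟨ε₁, hε₁, hu₁⟩ := husc1
  obtain ⟨ε₂, hε₂, hu₂⟩ := husc2
  set ρ : ℝ := min r (min ε₁ ε₂ / 2) with hρdef
  have hρ : 0 < ρ := by
    rw [hρdef]
    exact lt_min hr (by positivity)
  have hρr : ρ ≤ r := min_le_left _ _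
  have hρε₁ : ρ < ε₁ := lt_of_le_of_lt (min_le_right _ _) (by
    rw [div_lt_iff₀ (by norm_num : (0:ℝ) < 2)]
    nlinarith [min_le_left ε₁ ε₂])
  have hρε₂ : ρ < ε₂ := lt_of_le_of_lt (min_le_right _ _) (by
    rw [div_lt_iff₀ (by norm_num : (0:ℝ) < 2)]
    nlinarith [min_le_right ε₁ ε₂])
  -- choose the constant C
  set C : ℝ := max 0 ((M - min p q - δ) / ρ^2) with hCdef
  have hC0 : 0 ≤ C := le_max_left _ _
  have hCkey : M - min p q - C * ρ^2 ≤ δ := by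
    have h1 : (M - min p q - δ) / ρ^2 ≤ C := le_max_right _ _
    have h2 : (M - min p q - δ) ≤ C * ρ^2 := by
      rw [div_le_iff₀ (by positivity)] at h1
      linarith
    linarith
  -- the test function
  set α : ℝ := -p + m*t₁ with hαdef
  set v : (Fin (n+1) → ℝ) → ℝ := pcQuad α m C x₀ with hvdef
  have hvC2 : ContDiffOn ℝ 2 v U := (pc_contDiff_quad α m C x₀).contDiffOn
  have hvhess : ∀ y ∈ U, hessianMatrix v y ∈ dualSub (calF n c) := by
    intro y _
    rw [hvdef, pc_quad_hessian]
    exact pc_diag_mem_dualSub hc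
  have hsubaff := hsub v hvC2 hvhess
  -- nonnegativity of the quadratic part
  have hsumnn : ∀ y : Fin (n+1) → ℝ, 0 ≤ ∑ j : Fin n, (y j.succ - x₀ j)^2 :=
    fun y => Finset.sum_nonneg fun j _ => sq_nonneg _
  -- bound on the boundary
  have hbd : ∀ y ∈ frontier K, u y + ((v y : ℝ) : EReal) ≤ ((δ : ℝ) : EReal) := by
    intro y hyfr
    have hyK : y ∈ K := by
      have := frontier_subset_closure hyfr
      rwa [hKc.isClosed.closure_eq] at this
    have hyI : ¬ y ∈ interior K := hyfr.2
    set O : Set (Fin (n+1) → ℝ) :=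
      {y | y 0 ∈ Set.Ioo t₁ t₂ ∧ Fin.tail y ∈ Metric.ball x₀ r} with hOdef
    have hOopen : IsOpen O := by
      rw [hOdef]
      exact pc_open_box isOpen_Ioo Metric.isOpen_ball
    have hOK : O ⊆ K := by
      intro y hy
      rw [hKmem]
      exact ⟨Set.Ioo_subset_Icc_self hy.1, Metric.ball_subset_closedBall hy.2⟩
    have hyO : ¬ y ∈ O := fun h => hyI (interior_maximal hOK hOopen h)
    obtain ⟨hy0, hyt⟩ := (hKmem y).1 hyK
    -- the value of v on K
    have hvy : v y = α - m * y 0 - C * ∑ j : Fin n, (y j.succ - x₀ j)^2 := rfl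
    have hvy_le : ∀ t', y 0 = t' → v y ≤ -p - m * (t' - t₁) := by
      intro t' ht'
      rw [hvy, ht', hαdef]
      nlinarith [mul_nonneg hC0 (hsumnn y)]
    by_cases hdist : dist (Fin.tail y) x₀ < ρ
    · -- near the axis : endpoint faces
      have hyball : Fin.tail y ∈ Metric.ball x₀ r := by
        rw [Metric.mem_ball]
        exact lt_of_lt_of_le hdist hρr
      have hy0end : y 0 = t₁ ∨ y 0 = t₂ := by
        by_contra hcon
        push_neg at hcon
        apply hyO
        rw [hOdef]
        exact ⟨⟨lt_of_le_of_ne hy0.1 (Ne.symm hcon.1), lt_of_le_of_ne hy0.2 hcon.2⟩, hyball⟩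
      have hcons : (Fin.cons (y 0) (Fin.tail y) : Fin (n+1) → ℝ) = y := Fin.cons_self_tail y
      rcases hy0end with h0 | h0
      · have hdy : dist y z₁ < ε₁ := by
          have : dist y z₁ ≤ dist (Fin.tail y) x₀ := by
            rw [hz₁, ← hcons, h0]
            exact pc_dist_cons t₁ (Fin.tail y) x₀
          linarith
        have h1 : u y < ((p + δ : ℝ) : EReal) := hu₁ hdy
        have h2 : v y ≤ -p := by
          have := hvy_le t₁ h0
          simpa using this
        calc u y + ((v y : ℝ) : EReal) ≤ ((p + δ : ℝ) : EReal) + ((-p : ℝ) : EReal) :=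
              add_le_add h1.le (EReal.coe_le_coe_iff.2 h2)
          _ = ((δ : ℝ) : EReal) := by
              rw [← EReal.coe_add]
              norm_num
      · have hdy : dist y z₂ < ε₂ := by
          have : dist y z₂ ≤ dist (Fin.tail y) x₀ := by
            rw [hz₂, ← hcons, h0]
            exact pc_dist_cons t₂ (Fin.tail y) x₀
          linarith
        have h1 : u y < ((q + δ : ℝ) : EReal) := hu₂ hdy
        have h2 : v y ≤ -q := by
          have h3 := hvy_le t₂ h0
          have hmq : -p - m * (t₂ - t₁) = -q := by linarith [hm]
          linarith [hmq ▸ h3]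
        calc u y + ((v y : ℝ) : EReal) ≤ ((q + δ : ℝ) : EReal) + ((-q : ℝ) : EReal) :=
              add_le_add h1.le (EReal.coe_le_coe_iff.2 h2)
          _ = ((δ : ℝ) : EReal) := by
              rw [← EReal.coe_add]
              norm_num
    · -- far from the axis : use the global bound
      push_neg at hdist
      have hsq : ρ^2 ≤ ∑ j : Fin n, (y j.succ - x₀ j)^2 := by
        have hd : dist (Fin.tail y) x₀ ≤ Real.sqrt (∑ j : Fin n, (y j.succ - x₀ j)^2) := by
          rw [dist_pi_le_iff (Real.sqrt_nonneg _)]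
          intro j
          rw [Real.dist_eq, ← Real.sqrt_sq_eq_abs]
          refine Real.sqrt_le_sqrt ?_
          have he : (Fin.tail y j - x₀ j)^2 = (y j.succ - x₀ j)^2 := rfl
          rw [he]
          exact Finset.single_le_sum (fun j _ => sq_nonneg (y j.succ - x₀ j))
            (Finset.mem_univ j)
        have h1 : ρ ≤ Real.sqrt (∑ j : Fin n, (y j.succ - x₀ j)^2) := le_trans hdist hd
        have h2 := Real.sq_sqrt (hsumnn y)
        nlinarith [Real.sqrt_nonneg (∑ j : Fin n, (y j.succ - x₀ j)^2)]
      have h1 : u y ≤ ((M : ℝ) : EReal) := hM y hyK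
      have h2 : v y ≤ -(min p q) - C * ρ^2 := by
        rw [hvy]
        have hl : min p q ≤ p + m * (y 0 - t₁) := hllb (y 0) hy0
        have hq2 : C * ρ^2 ≤ C * ∑ j : Fin n, (y j.succ - x₀ j)^2 :=
          mul_le_mul_of_nonneg_left hsq hC0
        rw [hαdef]
        linarith
      calc u y + ((v y : ℝ) : EReal)
            ≤ ((M : ℝ) : EReal) + ((-(min p q) - C * ρ^2 : ℝ) : EReal) :=
            add_le_add h1 (EReal.coe_le_coe_iff.2 h2)
        _ ≤ ((δ : ℝ) : EReal) := by
            rw [← EReal.coe_add]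
            exact EReal.coe_le_coe_iff.2 (by linarith)
  -- apply subaffinity with the constant affine map δ
  have hzmK : zm ∈ K := by
    rw [hKmem]
    refine ⟨by simpa [hzm] using htmIcc, ?_⟩
    rw [hzm, Fin.tail_cons]
    exact Metric.mem_closedBall_self hr.le
  have happ := hsubaff (AffineMap.const ℝ (Fin (n+1) → ℝ) δ) K hKc hKU
    (by
      intro y hy
      simpa using hbd y hy) zm hzmK
  beta_reduce at happ
  have hvzm : v zm = α - m*tm := by
    rw [hvdef, pcQuad, hzm]
    simp [Fin.cons_succ, Fin.cons_zero]
  have hvzm' : v zm = -(a*p+b*q) := by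
    rw [hvzm, hαdef]
    linarith [hltm]
  rw [hvzm'] at happ
  simp only [AffineMap.const_apply] at happ
  -- conclude
  have h2 := add_le_add_left happ (((a*p+b*q : ℝ) : ℝ) : EReal)
  rw [add_assoc, ← EReal.coe_add, show (-(a*p+b*q)+(a*p+b*q) : ℝ) = 0 by ring] at h2
  rw [EReal.coe_zero, add_zero, ← EReal.coe_add] at h2
  rw [show (δ + (a*p+b*q) : ℝ) = a*p+b*q+δ by ring] at h2
  exact h2

end PCAux

/-- **Partial convexity.**  Let `D ⊂ ℝⁿ` be a bounded domain, `I ⊂ ℝ` an open interval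
and `c ∈ [nπ/2, (n+1)π/2)`.  If `u ∈ ℱ_c(I × D)`, then for every `x ∈ D` the function
`t ↦ u(t, x)` is convex on `I` (stated as the convexity inequality for the
`EReal`-valued function `u`). -/
theorem partial_convexity (n : ℕ) (c : ℝ)
    (hc : (n : ℝ) * π / 2 ≤ c) (hc' : c < ((n : ℝ) + 1) * π / 2)
    (I : Set ℝ) (hIopen : IsOpen I) (hIconv : Convex ℝ I) (hIne : I.Nonempty)
    (D : Set (Fin n → ℝ)) (hDopen : IsOpen D) (hDconn : IsConnected D)
    (hDbdd : Bornology.IsBounded D)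
    (u : (Fin (n+1) → ℝ) → EReal)
    (hu : IsTypeF (calF n c) {y | y 0 ∈ I ∧ Fin.tail y ∈ D} u) :
    ∀ x ∈ D, ∀ t₁ ∈ I, ∀ t₂ ∈ I, ∀ a b : ℝ, 0 ≤ a → 0 ≤ b → a + b = 1 →
      u (Fin.cons (a * t₁ + b * t₂) x) ≤
        (a : EReal) * u (Fin.cons t₁ x) + (b : EReal) * u (Fin.cons t₂ x) := by
  intro x hx t₁ ht₁ t₂ ht₂ a b ha hb hab
  have hUmem : ∀ t ∈ I,
      (Fin.cons t x : Fin (n+1) → ℝ) ∈ {y : Fin (n+1) → ℝ | y 0 ∈ I ∧ Fin.tail y ∈ D} := by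
    intro t ht
    constructor
    · simpa using ht
    · simpa [Fin.tail_cons] using hx
  have H : ∀ p q : ℝ, u (Fin.cons t₁ x) ≤ ((p : ℝ) : EReal) →
      u (Fin.cons t₂ x) ≤ ((q : ℝ) : EReal) →
      u (Fin.cons (a*t₁+b*t₂) x) ≤ ((a*p+b*q : ℝ) : EReal) := by
    rcases le_total t₁ t₂ with h | h
    · intro p q hp hq
      exact pc_key hc hIopen hIconv hDopen hu hx ht₁ ht₂ h hp hq ha hb hab
    · intro p q hp hq
      have := pc_key hc hIopen hIconv hDopen hu hx ht₂ ht₁ h hq hp hb ha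
        (by linarith)
      rw [show b*t₂+a*t₁ = a*t₁+b*t₂ by ring, show b*q+a*p = a*p+b*q by ring] at this
      exact this
  set A : EReal := u (Fin.cons t₁ x) with hA
  set B : EReal := u (Fin.cons t₂ x) with hB
  have hAtop : A ≠ ⊤ := hu.1 _ (hUmem t₁ ht₁)
  have hBtop : B ≠ ⊤ := hu.1 _ (hUmem t₂ ht₂)
  -- reduce to bounding by any real above the RHS
  have Hr : ∀ rr : ℝ, (a : EReal) * A + (b : EReal) * B < ((rr : ℝ) : EReal) →
      u (Fin.cons (a*t₁+b*t₂) x) ≤ ((rr : ℝ) : EReal) := by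
    intro rr hrr
    obtain ⟨pp, qq, hApp, hBqq, hsum⟩ : ∃ pp qq : ℝ, A ≤ ((pp:ℝ):EReal) ∧
        B ≤ ((qq:ℝ):EReal) ∧ a*pp + b*qq ≤ rr := by
      by_cases hAb : A = ⊥
      · by_cases ha0 : a = 0
        · -- a = 0, b = 1
          have hb1 : b = 1 := by linarith
          have hrr' : B < ((rr : ℝ) : EReal) := by
            rw [hAb, ha0, hb1] at hrr
            simpa [EReal.coe_zero, EReal.coe_one, EReal.zero_mul, one_mul] using hrr
          by_cases hBb : B = ⊥
          · exact ⟨0, rr, by rw [hAb]; exact bot_le, by rw [hBb]; exact bot_le,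
              by rw [ha0, hb1]; ring_nf; exact le_refl rr⟩
          · refine ⟨0, B.toReal, by rw [hAb]; exact bot_le,
              le_of_eq (EReal.coe_toReal hBtop hBb).symm, ?_⟩
            have h1 : (B.toReal : EReal) < ((rr : ℝ) : EReal) := by
              rwa [EReal.coe_toReal hBtop hBb]
            rw [ha0, hb1]
            have := EReal.coe_lt_coe_iff.1 h1
            linarith
        · -- a > 0
          have hapos : 0 < a := lt_of_le_of_ne ha (Ne.symm ha0)
          by_cases hBb : B = ⊥
          · refine ⟨(rr - b*0)/a, 0, by rw [hAb]; exact bot_le,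
              by rw [hBb]; exact bot_le, ?_⟩
            have heq : a * ((rr - b*0)/a) = rr - b*0 := by field_simp
            linarith
          · refine ⟨(rr - b*B.toReal)/a, B.toReal, by rw [hAb]; exact bot_le,
              le_of_eq (EReal.coe_toReal hBtop hBb).symm, ?_⟩
            have heq : a * ((rr - b*B.toReal)/a) = rr - b*B.toReal := by field_simp
            linarith
      · -- A is real
        have hAeq : ((A.toReal : ℝ) : EReal) = A := EReal.coe_toReal hAtop hAb
        by_cases hBb : B = ⊥
        · by_cases hb0 : b = 0
          · have ha1 : a = 1 := by linarith
            have hrr' : A < ((rr : ℝ) : EReal) := by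
              rw [hBb, hb0, ha1] at hrr
              simpa [EReal.coe_zero, EReal.coe_one, EReal.zero_mul, one_mul] using hrr
            refine ⟨A.toReal, 0, le_of_eq hAeq.symm, by rw [hBb]; exact bot_le, ?_⟩
            have h1 : (A.toReal : EReal) < ((rr : ℝ) : EReal) := by rwa [hAeq]
            have := EReal.coe_lt_coe_iff.1 h1
            rw [ha1, hb0]
            linarith
          · have hbpos : 0 < b := lt_of_le_of_ne hb (Ne.symm hb0)
            refine ⟨A.toReal, (rr - a*A.toReal)/b, le_of_eq hAeq.symm,
              by rw [hBb]; exact bot_le, ?_⟩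
            have heq : b * ((rr - a*A.toReal)/b) = rr - a*A.toReal := by field_simp
            linarith
        · have hBeq : ((B.toReal : ℝ) : EReal) = B := EReal.coe_toReal hBtop hBb
          refine ⟨A.toReal, B.toReal, le_of_eq hAeq.symm, le_of_eq hBeq.symm, ?_⟩
          have h1 : (a : EReal) * A = ((a * A.toReal : ℝ) : EReal) := by
            conv_lhs => rw [← hAeq]
            rw [← EReal.coe_mul]
          have h2 : (b : EReal) * B = ((b * B.toReal : ℝ) : EReal) := by
            conv_lhs => rw [← hBeq]
            rw [← EReal.coe_mul]
          rw [h1, h2, ← EReal.coe_add, EReal.coe_lt_coe_iff] at hrr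
          linarith
    exact (H pp qq hApp hBqq).trans (EReal.coe_le_coe_iff.2 hsum)
  -- conclude
  by_contra hcon
  rw [not_le] at hcon
  obtain ⟨y, hy1, hy2⟩ := EReal.exists_between_coe_real hcon
  exact absurd (lt_of_le_of_lt (Hr y hy1) hy2) (lt_irrefl _)
end

section
/- Let I ⊂ ℝ be an open interval, D ⊂ ℝⁿ a domain, and f ∈ C²(I × D) with ∂²f/∂t²(t, x) > 0 for all (t, x) ∈ I × D. Suppose that for each x ∈ D the function t ↦ f(t, x) attains its infimum over I at a (necessarily unique) point t(x) ∈ I, and set g(x) := f(t(x), x). Then for all x ∈ D: det( I + i ∇²g(x) ) = det( I_n + i ∇²f(t(x), x) ) / ( i ∂²_t f(t(x), x) ), where ∇²f denotes the full (n+1)×(n+1) Hessian of f in the variables (t, x), ∇²g the n×n Hessian of g, I the n×n identity matrix, and I_n := diag(0,1,…,1) ∈ Sym(ℝ^{n+1}). -/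
open Real Filter Matrix

noncomputable section AuxDet

/-- cons as a continuous linear map -/
def consL (n : ℕ) : (ℝ × (Fin n → ℝ)) →L[ℝ] (Fin (n+1) → ℝ) :=
  ContinuousLinearMap.pi (fun i => Fin.cases (ContinuousLinearMap.fst ℝ ℝ (Fin n → ℝ))
    (fun j => (ContinuousLinearMap.proj j).comp (ContinuousLinearMap.snd ℝ ℝ (Fin n → ℝ))) i)

lemma consL_apply {n : ℕ} (a : ℝ) (v : Fin n → ℝ) : consL n (a, v) = Fin.cons a v := by
  funext i
  refine Fin.cases ?_ (fun j => ?_) i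
  · show (ContinuousLinearMap.pi _) (a, v) 0 = _
    rw [ContinuousLinearMap.pi_apply, Fin.cases_zero]
    simp
  · show (ContinuousLinearMap.pi _) (a, v) j.succ = _
    rw [ContinuousLinearMap.pi_apply, Fin.cases_succ]
    simp

def tailL (n : ℕ) : (Fin (n+1) → ℝ) →L[ℝ] (Fin n → ℝ) :=
  ContinuousLinearMap.pi fun i => ContinuousLinearMap.proj i.succ

lemma tailL_apply {n : ℕ} (y : Fin (n+1) → ℝ) : tailL n y = Fin.tail y := rfl

lemma cons_one_zero {n : ℕ} : (Fin.cons 1 0 : Fin (n+1) → ℝ) = Pi.single 0 1 := by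
  funext i
  refine Fin.cases ?_ (fun j => ?_) i <;>
    simp [Pi.single_apply, Fin.succ_ne_zero]

lemma cons_zero_single {n : ℕ} (i : Fin n) :
    (Fin.cons 0 (Pi.single i 1) : Fin (n+1) → ℝ) = Pi.single i.succ 1 := by
  funext k
  refine Fin.cases ?_ (fun j => ?_) k
  · simp [Pi.single_apply, (Fin.succ_ne_zero i).symm]
  · simp [Pi.single_apply, Fin.succ_inj]

lemma cons_decomp {n : ℕ} (a : ℝ) (v : Fin n → ℝ) :
    (Fin.cons a v : Fin (n+1) → ℝ) = a • (Fin.cons 1 0 : Fin (n+1) → ℝ) + Fin.cons 0 v := by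
  funext i
  refine Fin.cases ?_ (fun j => ?_) i <;> simp

lemma hessian_eq {m : ℕ} (f : (Fin m → ℝ) → ℝ) (y : Fin m → ℝ) (i j : Fin m) :
    hessianMatrix f y i j = fderiv ℝ (fderiv ℝ f) y (Pi.single i 1) (Pi.single j 1) := by
  show iteratedFDeriv ℝ 2 f y ![Pi.single i 1, Pi.single j 1] = _
  rw [iteratedFDeriv_two_apply]
  simp

lemma fderiv_fderiv_apply {m : ℕ} {f : (Fin m → ℝ) → ℝ} {y : Fin m → ℝ}
    (hf : ContDiffAt ℝ 2 f y) (v w : Fin m → ℝ) :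
    fderiv ℝ (fun z => fderiv ℝ f z v) y w = fderiv ℝ (fderiv ℝ f) y w v := by
  have hd : DifferentiableAt ℝ (fderiv ℝ f) y :=
    (hf.fderiv_right (m := 1) (le_refl 2)).differentiableAt one_ne_zero
  have h1 : HasFDerivAt (fun z => (ContinuousLinearMap.apply ℝ ℝ v) (fderiv ℝ f z))
      ((ContinuousLinearMap.apply ℝ ℝ v).comp (fderiv ℝ (fderiv ℝ f) y)) y :=
    (ContinuousLinearMap.apply ℝ ℝ v).hasFDerivAt.comp y hd.hasFDerivAt
  have := h1.fderiv
  rw [show (fun z => (ContinuousLinearMap.apply ℝ ℝ v) (fderiv ℝ f z)) =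
    (fun z => fderiv ℝ f z v) from rfl] at this
  rw [this]
  rfl

lemma hessian_symm {m : ℕ} {f : (Fin m → ℝ) → ℝ} {y : Fin m → ℝ}
    (hf : ContDiffAt ℝ 2 f y) (i j : Fin m) :
    hessianMatrix f y i j = hessianMatrix f y j i := by
  rw [hessian_eq, hessian_eq]
  exact (hf.isSymmSndFDerivAt (by simp)) _ _

lemma det_schur {n : ℕ} (A : Matrix (Fin (n+1)) (Fin (n+1)) ℝ) (ha : A 0 0 ≠ 0)
    (hsymm : ∀ i : Fin n, A i.succ 0 = A 0 i.succ) :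
    Matrix.det (cmat A) = (Complex.I * (A 0 0 : ℂ)) *
      Matrix.det ((1 : Matrix (Fin n) (Fin n) ℂ) + Complex.I •
        (Matrix.of fun i j : Fin n => A i.succ j.succ - A 0 i.succ * A 0 j.succ / A 0 0).map
          (fun a => (a : ℂ))) := by
  have haC : (A 0 0 : ℂ) ≠ 0 := Complex.ofReal_ne_zero.2 ha
  have hIa : Complex.I * (A 0 0 : ℂ) ≠ 0 := mul_ne_zero Complex.I_ne_zero haC
  set e : Fin 1 ⊕ Fin n ≃ Fin (n+1) := finSumFinEquiv.trans (finCongr (Nat.add_comm 1 n)) with he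
  have he0 : e (Sum.inl 0) = 0 := by
    apply Fin.ext; simp [he, finSumFinEquiv]
  have heS : ∀ j : Fin n, e (Sum.inr j) = j.succ := by
    intro j; apply Fin.ext; simp [he, finSumFinEquiv]
  set B11 : Matrix (Fin 1) (Fin 1) ℂ := Matrix.of fun _ _ => Complex.I * (A 0 0 : ℂ) with hB11
  set B12 : Matrix (Fin 1) (Fin n) ℂ := Matrix.of fun _ j => Complex.I * (A 0 j.succ : ℂ) with hB12
  set B21 : Matrix (Fin n) (Fin 1) ℂ := Matrix.of fun i _ => Complex.I * (A i.succ 0 : ℂ) with hB21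
  set B22 : Matrix (Fin n) (Fin n) ℂ :=
    Matrix.of (fun i j => (if i = j then (1:ℂ) else 0) + Complex.I * (A i.succ j.succ : ℂ)) with hB22
  have hsub : (cmat A).submatrix e e = Matrix.fromBlocks B11 B12 B21 B22 := by
    ext i j
    rcases i with i | i <;> rcases j with j | j <;>
      simp [Matrix.submatrix_apply, he0, heS, Fin.fin_one_eq_zero,
        cmat, Inmat, Matrix.diagonal_apply, Fin.succ_ne_zero, (Fin.succ_ne_zero _).symm,
        Fin.succ_inj, Matrix.fromBlocks, hB11, hB12, hB21, hB22]
  set C : Matrix (Fin 1) (Fin 1) ℂ := Matrix.of fun _ _ => (Complex.I * (A 0 0 : ℂ))⁻¹ with hC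
  have hCB : C * B11 = 1 := by
    ext i j
    rw [Fin.fin_one_eq_zero i, Fin.fin_one_eq_zero j]
    simp only [Matrix.mul_apply, Fin.sum_univ_one, hC, hB11, Matrix.of_apply,
      Matrix.one_apply_eq]
    exact inv_mul_cancel₀ hIa
  have hBC : B11 * C = 1 := by
    ext i j
    rw [Fin.fin_one_eq_zero i, Fin.fin_one_eq_zero j]
    simp only [Matrix.mul_apply, Fin.sum_univ_one, hC, hB11, Matrix.of_apply,
      Matrix.one_apply_eq]
    exact mul_inv_cancel₀ hIa
  letI : Invertible B11 := ⟨C, hCB, hBC⟩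
  have hdet1 : (cmat A).det = (Matrix.fromBlocks B11 B12 B21 B22).det := by
    rw [← hsub, Matrix.det_submatrix_equiv_self]
  rw [hdet1, Matrix.det_fromBlocks₁₁]
  congr 1
  · simp [Matrix.det_fin_one, hB11]
  · congr 1
    ext i j
    have hinv : (⅟B11 : Matrix (Fin 1) (Fin 1) ℂ) = C := rfl
    rw [hinv]
    have hmul : (B21 * C * B12) i j
        = (Complex.I * (A i.succ 0 : ℂ)) * (Complex.I * (A 0 0 : ℂ))⁻¹
          * (Complex.I * (A 0 j.succ : ℂ)) := by
      simp only [Matrix.mul_apply, Fin.sum_univ_one, hC, hB21, hB12, Matrix.of_apply]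
    rw [Matrix.sub_apply, hmul]
    simp only [hB22, Matrix.of_apply, Matrix.add_apply, Matrix.smul_apply, Matrix.map_apply,
      Matrix.one_apply, smul_eq_mul]
    rw [hsymm i, add_sub_assoc]
    congr 1
    push_cast
    field_simp

end AuxDet

set_option maxHeartbeats 2000000 in
/-- Under the hypotheses of the minimum lemma, for all `x ∈ D`,
`det(I + i ∇²g(x)) = det(I_n + i ∇²f(t(x),x)) / (i ∂²_t f(t(x),x))`. -/
theorem det_hessian_formula (n : ℕ)
    (I : Set ℝ) (hIopen : IsOpen I) (hIconv : Convex ℝ I) (hIne : I.Nonempty)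
    (D : Set (Fin n → ℝ)) (hDopen : IsOpen D) (hDconn : IsConnected D)
    (f : (Fin (n+1) → ℝ) → ℝ)
    (hf : ContDiffOn ℝ 2 f {y | y 0 ∈ I ∧ Fin.tail y ∈ D})
    (hftt : ∀ y ∈ {y : Fin (n+1) → ℝ | y 0 ∈ I ∧ Fin.tail y ∈ D},
      0 < hessianMatrix f y 0 0)
    (tfun : (Fin n → ℝ) → ℝ) (htI : ∀ x ∈ D, tfun x ∈ I)
    (hmin : ∀ x ∈ D, ∀ t ∈ I, f (Fin.cons (tfun x) x) ≤ f (Fin.cons t x))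
    (g : (Fin n → ℝ) → ℝ) (hg : ∀ x, g x = f (Fin.cons (tfun x) x)) :
    ∀ x ∈ D,
      Matrix.det ((1 : Matrix (Fin n) (Fin n) ℂ) +
          Complex.I • (hessianMatrix g x).map (fun a => (a : ℂ))) =
        Matrix.det (cmat (hessianMatrix f (Fin.cons (tfun x) x))) /
          (Complex.I * (hessianMatrix f (Fin.cons (tfun x) x) 0 0 : ℂ)) := by
  intro x₀ hx₀
  classical
  set U : Set (Fin (n+1) → ℝ) := {y | y 0 ∈ I ∧ Fin.tail y ∈ D} with hUdef
  have hUopen : IsOpen U := by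
    have : U = (fun y : Fin (n+1) → ℝ => y 0) ⁻¹' I ∩
        (fun y : Fin (n+1) → ℝ => Fin.tail y) ⁻¹' D := rfl
    rw [this]
    exact (hIopen.preimage (continuous_apply 0)).inter
      (hDopen.preimage (continuous_pi fun i => continuous_apply i.succ))
  have hfC : ∀ y ∈ U, ContDiffAt ℝ 2 f y := fun y hy => hf.contDiffAt (hUopen.mem_nhds hy)
  set ft : (Fin (n+1) → ℝ) → ℝ := fun y => fderiv ℝ f y (Pi.single 0 1) with hftdef
  have hftC : ∀ y ∈ U, ContDiffAt ℝ 1 ft y := by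
    intro y hy
    exact ((hfC y hy).fderiv_right le_rfl).clm_apply contDiffAt_const
  have hmem : ∀ t (x : Fin n → ℝ), t ∈ I → x ∈ D → (Fin.cons t x : Fin (n+1) → ℝ) ∈ U := by
    intro t x htx hxD
    constructor
    · simpa using htx
    · simpa using hxD
  -- derivative of the curve s ↦ cons s x
  have hc : ∀ (x : Fin n → ℝ) (t : ℝ),
      HasDerivAt (fun s : ℝ => (Fin.cons s x : Fin (n+1) → ℝ)) (Fin.cons 1 0) t := by
    intro x t
    have h1 : HasDerivAt (fun s : ℝ => (s, x)) ((1 : ℝ), (0 : Fin n → ℝ)) t :=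
      (hasDerivAt_id t).prodMk (hasDerivAt_const t x)
    have h2 := (consL n).hasFDerivAt.comp_hasDerivAt t h1
    have h3 : (⇑(consL n) ∘ fun s : ℝ => (s, x)) = fun s : ℝ => (Fin.cons s x : Fin (n+1) → ℝ) := by
      funext s; exact consL_apply s x
    rw [h3] at h2
    simpa [consL_apply] using h2
  have hφd : ∀ (x : Fin n → ℝ) (t : ℝ), (Fin.cons t x : Fin (n+1) → ℝ) ∈ U →
      HasDerivAt (fun s : ℝ => f (Fin.cons s x)) (ft (Fin.cons t x)) t := by
    intro x t hy
    have hd := ((hfC _ hy).differentiableAt two_ne_zero).hasFDerivAt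
    have h2 := hd.comp_hasDerivAt t (hc x t)
    rw [cons_one_zero] at h2
    exact h2
  -- critical point equation
  have hcrit : ∀ x ∈ D, ft (Fin.cons (tfun x) x) = 0 := by
    intro x hx
    have hloc : IsLocalMin (fun s : ℝ => f (Fin.cons s x)) (tfun x) := by
      filter_upwards [hIopen.mem_nhds (htI x hx)] with s hs using hmin x hx s hs
    exact hloc.hasDerivAt_eq_zero (hφd x (tfun x) (hmem _ _ (htI x hx) hx))
  -- second derivative of the curve
  have htt : ∀ (x : Fin n → ℝ) (t : ℝ), (h : (Fin.cons t x : Fin (n+1) → ℝ) ∈ U) →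
      HasDerivAt (fun s : ℝ => ft (Fin.cons s x))
        (hessianMatrix f (Fin.cons t x) 0 0) t := by
    intro x t h
    have hd := ((hftC _ h).differentiableAt one_ne_zero).hasFDerivAt
    have h2 := hd.comp_hasDerivAt t (hc x t)
    rw [cons_one_zero] at h2
    have h3 : fderiv ℝ ft (Fin.cons t x) (Pi.single 0 1)
        = hessianMatrix f (Fin.cons t x) 0 0 := by
      rw [hftdef]
      rw [fderiv_fderiv_apply (hfC _ h), hessian_eq]
    rwa [h3] at h2
  -- uniqueness of the critical point
  have huniq : ∀ x ∈ D, ∀ t ∈ I, ft (Fin.cons t x) = 0 → t = tfun x := by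
    intro x hx t ht h0
    have hsm : StrictMonoOn (fun s : ℝ => ft (Fin.cons s x)) I := by
      apply strictMonoOn_of_deriv_pos hIconv
      · intro s hs
        exact ((htt x s (hmem _ _ hs hx)).continuousAt).continuousWithinAt
      · intro s hs
        rw [hIopen.interior_eq] at hs
        rw [(htt x s (hmem _ _ hs hx)).deriv]
        exact hftt _ (hmem _ _ hs hx)
    exact hsm.injOn ht (htI x hx) (by rw [h0, hcrit x hx])
  -- the base point
  set y₀ : Fin (n+1) → ℝ := Fin.cons (tfun x₀) x₀ with hy₀def
  have hy₀ : y₀ ∈ U := hmem _ _ (htI x₀ hx₀) hx₀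
  set A : Matrix (Fin (n+1)) (Fin (n+1)) ℝ := hessianMatrix f y₀ with hAdef
  have haA : 0 < A 0 0 := hftt y₀ hy₀
  set Dft : (Fin (n+1) → ℝ) →L[ℝ] ℝ := fderiv ℝ ft y₀ with hDftdef
  have hDft_single : ∀ w, Dft w = fderiv ℝ (fderiv ℝ f) y₀ w (Pi.single 0 1) := by
    intro w
    rw [hDftdef, hftdef, fderiv_fderiv_apply (hfC _ hy₀)]
  have hDft0 : Dft (Fin.cons 1 0) = A 0 0 := by
    rw [cons_one_zero, hDft_single, hAdef, hessian_eq]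
  have hDftS : ∀ i : Fin n, Dft (Fin.cons 0 (Pi.single i 1)) = A i.succ 0 := by
    intro i
    rw [cons_zero_single, hDft_single, hAdef, hessian_eq]
  have hdec : ∀ (c : ℝ) (v : Fin n → ℝ),
      Dft (Fin.cons c v) = c * A 0 0 + Dft (Fin.cons 0 v) := by
    intro c v
    rw [cons_decomp c v, map_add, Dft.map_smul, smul_eq_mul, hDft0]
  -- the map Φ and its derivative
  set Φ : (Fin (n+1) → ℝ) → (Fin (n+1) → ℝ) := fun y => Fin.cons (ft y) (Fin.tail y) with hΦdef
  set L : (Fin (n+1) → ℝ) →L[ℝ] (Fin (n+1) → ℝ) := (consL n).comp (Dft.prod (tailL n)) with hLdef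
  have hLapp : ∀ v, L v = Fin.cons (Dft v) (Fin.tail v) := by
    intro v
    rw [hLdef]
    simp [consL_apply, tailL_apply]
  have hΦd : HasFDerivAt Φ L y₀ := by
    have h1 : HasFDerivAt (fun y : Fin (n+1) → ℝ => (ft y, Fin.tail y))
        (Dft.prod (tailL n)) y₀ :=
      (((hftC y₀ hy₀).differentiableAt one_ne_zero).hasFDerivAt).prodMk ((tailL n).hasFDerivAt)
    have h2 := (consL n).hasFDerivAt.comp y₀ h1
    have h3 : (⇑(consL n) ∘ fun y : Fin (n+1) → ℝ => (ft y, Fin.tail y)) = Φ := by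
      funext y; exact consL_apply _ _
    rwa [h3] at h2
  -- inverse linear map
  set Jmap : (Fin (n+1) → ℝ) →L[ℝ] (Fin (n+1) → ℝ) :=
    (consL n).comp ((0 : (Fin (n+1) → ℝ) →L[ℝ] ℝ).prod (tailL n)) with hJdef
  have hJapp : ∀ w, Jmap w = Fin.cons 0 (Fin.tail w) := by
    intro w; rw [hJdef]; simp [consL_apply, tailL_apply]
  set r : (Fin (n+1) → ℝ) →L[ℝ] ℝ :=
    (A 0 0)⁻¹ • (ContinuousLinearMap.proj 0 - Dft.comp Jmap) with hrdef
  have hrapp : ∀ w, r w = (A 0 0)⁻¹ * (w 0 - Dft (Fin.cons 0 (Fin.tail w))) := by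
    intro w
    rw [hrdef]
    simp [hJapp w]
  set Linv : (Fin (n+1) → ℝ) →L[ℝ] (Fin (n+1) → ℝ) := (consL n).comp (r.prod (tailL n)) with hLinvdef
  have hLinvapp : ∀ w, Linv w = Fin.cons (r w) (Fin.tail w) := by
    intro w; rw [hLinvdef]; simp [consL_apply, tailL_apply]
  have hdecDft : ∀ w : Fin (n+1) → ℝ, Dft w = w 0 * A 0 0 + Dft (Fin.cons 0 (Fin.tail w)) := by
    intro w
    conv_lhs => rw [← Fin.cons_self_tail w]
    rw [hdec]
  have h₁ : Function.LeftInverse Linv L := by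
    intro v
    rw [hLinvapp, hLapp v, Fin.tail_cons, hrapp]
    simp only [Fin.cons_zero, Fin.tail_cons]
    rw [hdecDft v]
    have hkey : (A 0 0)⁻¹ * (v 0 * A 0 0 + Dft (Fin.cons 0 (Fin.tail v))
        - Dft (Fin.cons 0 (Fin.tail v))) = v 0 := by
      field_simp
      ring
    rw [hkey, Fin.cons_self_tail]
  have h₂ : Function.RightInverse Linv L := by
    intro w
    rw [hLapp, hLinvapp w, Fin.tail_cons, hrapp w]
    have : Dft (Fin.cons ((A 0 0)⁻¹ * (w 0 - Dft (Fin.cons 0 (Fin.tail w)))) (Fin.tail w))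
        = w 0 := by
      rw [hdec]
      field_simp
      ring
    rw [this, Fin.cons_self_tail]
  set Leq : (Fin (n+1) → ℝ) ≃L[ℝ] (Fin (n+1) → ℝ) :=
    ContinuousLinearEquiv.equivOfInverse L Linv h₁ h₂ with hLeqdef
  have hΦeq : HasFDerivAt Φ (Leq : (Fin (n+1) → ℝ) →L[ℝ] (Fin (n+1) → ℝ)) y₀ := hΦd
  have hΦC : ContDiffAt ℝ 1 Φ y₀ := by
    have h1 : ContDiffAt ℝ 1 (fun y : Fin (n+1) → ℝ => (ft y, Fin.tail y)) y₀ :=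
      (hftC y₀ hy₀).prodMk ((tailL n).contDiff.contDiffAt)
    have h2 := ((consL n).contDiff.contDiffAt).comp y₀ h1
    have h3 : (⇑(consL n) ∘ fun y : Fin (n+1) → ℝ => (ft y, Fin.tail y)) = Φ := by
      funext y; exact consL_apply _ _
    rwa [h3] at h2
  set ψ : (Fin (n+1) → ℝ) → (Fin (n+1) → ℝ) := hΦC.localInverse hΦeq one_ne_zero with hψdef
  have hψC : ContDiffAt ℝ 1 ψ (Φ y₀) := hΦC.to_localInverse hΦeq one_ne_zero
  have hψy₀ : ψ (Φ y₀) = y₀ := hΦC.localInverse_apply_image hΦeq one_ne_zero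
  have hrinv : ∀ᶠ z in nhds (Φ y₀), Φ (ψ z) = z :=
    (hΦC.hasStrictFDerivAt' hΦeq one_ne_zero).eventually_right_inverse
  have hΦy₀ : Φ y₀ = Fin.cons 0 x₀ := by
    rw [hΦdef]
    simp only [hy₀def]
    rw [show ft (Fin.cons (tfun x₀) x₀) = 0 from hcrit x₀ hx₀, Fin.tail_cons]
  -- the implicit function
  set ι : (Fin n → ℝ) → (Fin (n+1) → ℝ) := fun x => Fin.cons 0 x with hιdef
  have hιC : ContDiff ℝ 1 ι := by
    have h1 : ContDiff ℝ 1 (fun x : Fin n → ℝ => ((0:ℝ), x)) :=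
      contDiff_const.prodMk contDiff_id
    have h2 := (consL n).contDiff.comp h1
    have h3 : (⇑(consL n) ∘ fun x : Fin n → ℝ => ((0:ℝ), x)) = ι := by
      funext x; exact consL_apply _ _
    rwa [h3] at h2
  have hιx₀ : ι x₀ = Φ y₀ := by rw [hΦy₀]
  set th : (Fin n → ℝ) → ℝ := fun x => ψ (ι x) 0 with hthdef
  have hψC' : ContDiffAt ℝ 1 ψ (ι x₀) := by rw [hιx₀]; exact hψC
  have hψιC : ContDiffAt ℝ 1 (ψ ∘ ι) x₀ := hψC'.comp x₀ hιC.contDiffAt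
  have hthC : ContDiffAt ℝ 1 th x₀ := by
    have h2 := ((ContinuousLinearMap.proj (R := ℝ) (φ := fun _ : Fin (n+1) => ℝ)
      0).contDiff.contDiffAt).comp x₀ hψιC
    exact h2
  have hthx₀ : th x₀ = tfun x₀ := by
    show ψ (ι x₀) 0 = tfun x₀
    rw [hιx₀, hψy₀, hy₀def, Fin.cons_zero]
  -- eventual facts
  have hev1 : ∀ᶠ x in nhds x₀, Φ (ψ (ι x)) = ι x := by
    have htend : Tendsto ι (nhds x₀) (nhds (Φ y₀)) := by
      rw [← hιx₀]; exact (hιC.continuous.tendsto x₀)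
    exact htend.eventually hrinv
  have hev2 : ∀ᶠ x in nhds x₀, ft (Fin.cons (th x) x) = 0 ∧ ψ (ι x) = Fin.cons (th x) x := by
    filter_upwards [hev1] with x hx
    have hx' : Fin.cons (ft (ψ (ι x))) (Fin.tail (ψ (ι x))) = Fin.cons (0:ℝ) x := hx
    have h0 : ft (ψ (ι x)) = 0 := by
      have := congrFun hx' 0; simpa using this
    have htail : Fin.tail (ψ (ι x)) = x := by
      have := congrArg Fin.tail hx'; simpa using this
    have hw : ψ (ι x) = Fin.cons (th x) x := by
      conv_lhs => rw [← Fin.cons_self_tail (ψ (ι x))]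
      rw [htail]
    constructor
    · rw [← hw]; exact h0
    · exact hw
  have hev3 : ∀ᶠ x in nhds x₀, th x ∈ I := by
    have htend : Tendsto th (nhds x₀) (nhds (th x₀)) := hthC.continuousAt
    exact htend.eventually_mem (hIopen.mem_nhds (by rw [hthx₀]; exact htI x₀ hx₀))
  have hev4 : ∀ᶠ x in nhds x₀, x ∈ D := hDopen.mem_nhds hx₀
  have hevt : ∀ᶠ x in nhds x₀, th x = tfun x := by
    filter_upwards [hev2, hev3, hev4] with x h2 h3 h4
    exact huniq x h4 (th x) h3 h2.1
  have hevg : ∀ᶠ x in nhds x₀, g x = f (Fin.cons (th x) x) := by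
    filter_upwards [hevt] with x hx
    rw [hg x, hx]
  -- differentiability of th in a neighborhood
  obtain ⟨u, hu, huC⟩ := hthC.contDiffOn le_rfl (by simp)
  have hevd : ∀ᶠ x in nhds x₀, DifferentiableAt ℝ th x := by
    filter_upwards [isOpen_interior.mem_nhds (mem_interior_iff_mem_nhds.2 hu)] with x hx
    exact ((huC.mono interior_subset).contDiffAt
      (isOpen_interior.mem_nhds hx)).differentiableAt one_ne_zero
  -- gamma and its derivative
  set γ : (Fin n → ℝ) → (Fin (n+1) → ℝ) := fun x => Fin.cons (th x) x with hγdef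
  have hγx₀ : γ x₀ = y₀ := by
    show Fin.cons (th x₀) x₀ = y₀
    rw [hthx₀, hy₀def]
  have hγd : ∀ x : Fin n → ℝ, DifferentiableAt ℝ th x →
      HasFDerivAt γ ((consL n).comp ((fderiv ℝ th x).prod
        (ContinuousLinearMap.id ℝ (Fin n → ℝ)))) x := by
    intro x hx
    have h1 : HasFDerivAt (fun x : Fin n → ℝ => (th x, x))
        ((fderiv ℝ th x).prod (ContinuousLinearMap.id ℝ (Fin n → ℝ))) x :=
      (hx.hasFDerivAt).prodMk (hasFDerivAt_id x)
    have h2 := (consL n).hasFDerivAt.comp x h1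
    have h3 : (⇑(consL n) ∘ fun x : Fin n → ℝ => (th x, x)) = γ := by
      funext z; exact consL_apply _ _
    rwa [h3] at h2
  have hevγU : ∀ᶠ x in nhds x₀, γ x ∈ U := by
    filter_upwards [hev3, hev4] with x h3 h4
    exact hmem _ _ h3 h4
  -- decomposition of fderiv f
  have hdecf : ∀ (y : Fin (n+1) → ℝ) (c : ℝ) (v : Fin n → ℝ),
      fderiv ℝ f y (Fin.cons c v) = c * ft y + fderiv ℝ f y (Fin.cons 0 v) := by
    intro y c v
    rw [cons_decomp c v, map_add, (fderiv ℝ f y).map_smul, smul_eq_mul, cons_one_zero]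
  have hevft0 : ∀ᶠ x in nhds x₀, ft (γ x) = 0 := by
    filter_upwards [hev2] with x h2
    exact h2.1
  -- first derivative of g near x₀
  set Jn : (Fin n → ℝ) →L[ℝ] (Fin (n+1) → ℝ) :=
    (consL n).comp ((0 : (Fin n → ℝ) →L[ℝ] ℝ).prod
      (ContinuousLinearMap.id ℝ (Fin n → ℝ))) with hJndef
  have hJnapp : ∀ v, Jn v = Fin.cons 0 v := by
    intro v; rw [hJndef]; simp [consL_apply]
  have hgd : ∀ᶠ x in nhds x₀, fderiv ℝ g x = (fderiv ℝ f (γ x)).comp Jn := by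
    filter_upwards [hevd, hevγU, hevft0, hevg.eventually_nhds] with x hd hU2 h0 hgx
    have h1 : HasFDerivAt (fun z => f (γ z))
        ((fderiv ℝ f (γ x)).comp ((consL n).comp ((fderiv ℝ th x).prod
          (ContinuousLinearMap.id ℝ (Fin n → ℝ))))) x :=
      (((hfC _ hU2).differentiableAt two_ne_zero).hasFDerivAt).comp x (hγd x hd)
    have h2 : HasFDerivAt g ((fderiv ℝ f (γ x)).comp ((consL n).comp
        ((fderiv ℝ th x).prod (ContinuousLinearMap.id ℝ (Fin n → ℝ))))) x :=
      h1.congr_of_eventuallyEq hgx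
    rw [h2.fderiv]
    apply ContinuousLinearMap.ext
    intro v
    simp only [ContinuousLinearMap.comp_apply, ContinuousLinearMap.prod_apply,
      ContinuousLinearMap.id_apply]
    rw [consL_apply, hJnapp, hdecf, h0, mul_zero, zero_add]
  -- derivative of th at x₀
  have hdt : ∀ i : Fin n, fderiv ℝ th x₀ (Pi.single i 1) = -(A i.succ 0) / A 0 0 := by
    have hdx₀ : DifferentiableAt ℝ th x₀ := hthC.differentiableAt one_ne_zero
    have h5 : HasFDerivAt (fun x => ft (γ x)) (Dft.comp ((consL n).comp
        ((fderiv ℝ th x₀).prod (ContinuousLinearMap.id ℝ (Fin n → ℝ))))) x₀ := by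
      have h7 : HasFDerivAt ft Dft (γ x₀) := by
        rw [hγx₀]
        exact ((hftC y₀ hy₀).differentiableAt one_ne_zero).hasFDerivAt
      exact h7.comp x₀ (hγd x₀ hdx₀)
    have h8 : HasFDerivAt (fun x => ft (γ x)) (0 : (Fin n → ℝ) →L[ℝ] ℝ) x₀ :=
      (hasFDerivAt_const (0:ℝ) x₀).congr_of_eventuallyEq
        (by filter_upwards [hevft0] with z hz using hz)
    have h9 := h5.unique h8
    intro i
    have h10 := congrArg (fun T : (Fin n → ℝ) →L[ℝ] ℝ => T (Pi.single i 1)) h9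
    simp only [ContinuousLinearMap.comp_apply, ContinuousLinearMap.prod_apply,
      ContinuousLinearMap.id_apply, ContinuousLinearMap.zero_apply] at h10
    rw [consL_apply, hdec, hDftS] at h10
    have ha := haA.ne'
    field_simp
    linarith
  -- second derivative of g at x₀
  set R : ((Fin (n+1) → ℝ) →L[ℝ] ℝ) →L[ℝ] ((Fin n → ℝ) →L[ℝ] ℝ) :=
    (ContinuousLinearMap.compL ℝ (Fin n → ℝ) (Fin (n+1) → ℝ) ℝ).flip Jn with hRdef
  have hRapp : ∀ T : (Fin (n+1) → ℝ) →L[ℝ] ℝ, R T = T.comp Jn := by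
    intro T; rw [hRdef]; rfl
  have hDf2 : DifferentiableAt ℝ (fderiv ℝ f) y₀ :=
    ((hfC y₀ hy₀).fderiv_right (m := 1) le_rfl).differentiableAt one_ne_zero
  have hγd₀ := hγd x₀ (hthC.differentiableAt one_ne_zero)
  have hDgamma : HasFDerivAt (fun x => fderiv ℝ f (γ x))
      ((fderiv ℝ (fderiv ℝ f) y₀).comp ((consL n).comp ((fderiv ℝ th x₀).prod
        (ContinuousLinearMap.id ℝ (Fin n → ℝ))))) x₀ := by
    have h7 : HasFDerivAt (fderiv ℝ f) (fderiv ℝ (fderiv ℝ f) y₀) (γ x₀) := by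
      rw [hγx₀]; exact hDf2.hasFDerivAt
    exact h7.comp x₀ hγd₀
  have hRg : HasFDerivAt (fun x => (fderiv ℝ f (γ x)).comp Jn)
      (R.comp ((fderiv ℝ (fderiv ℝ f) y₀).comp ((consL n).comp ((fderiv ℝ th x₀).prod
        (ContinuousLinearMap.id ℝ (Fin n → ℝ)))))) x₀ := by
    have h6 := R.hasFDerivAt.comp x₀ hDgamma
    have h3 : (⇑R ∘ fun x => fderiv ℝ f (γ x)) = fun x => (fderiv ℝ f (γ x)).comp Jn := by
      funext z; exact hRapp _
    rwa [h3] at h6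
  have hfg2 : fderiv ℝ (fderiv ℝ g) x₀ = R.comp ((fderiv ℝ (fderiv ℝ f) y₀).comp
      ((consL n).comp ((fderiv ℝ th x₀).prod (ContinuousLinearMap.id ℝ (Fin n → ℝ))))) := by
    have heq : fderiv ℝ (fderiv ℝ g) x₀
        = fderiv ℝ (fun x => (fderiv ℝ f (γ x)).comp Jn) x₀ :=
      Filter.EventuallyEq.fderiv_eq hgd
    rw [heq, hRg.fderiv]
  have hsymmA : ∀ i : Fin n, A i.succ 0 = A 0 i.succ := by
    intro i
    rw [hAdef]
    exact hessian_symm (hfC y₀ hy₀) i.succ 0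
  have hgHess : ∀ i j : Fin n, hessianMatrix g x₀ i j
      = A i.succ j.succ - A 0 i.succ * A 0 j.succ / A 0 0 := by
    intro i j
    rw [hessian_eq, hfg2]
    simp only [ContinuousLinearMap.comp_apply, ContinuousLinearMap.prod_apply,
      ContinuousLinearMap.id_apply]
    rw [consL_apply, hRapp, ContinuousLinearMap.comp_apply, hJnapp, cons_zero_single,
      cons_decomp, map_add, (fderiv ℝ (fderiv ℝ f) y₀).map_smul, cons_zero_single, cons_one_zero]
    simp only [ContinuousLinearMap.add_apply, ContinuousLinearMap.coe_smul',
      Pi.smul_apply, smul_eq_mul]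
    rw [hdt i]
    have e1 : fderiv ℝ (fderiv ℝ f) y₀ (Pi.single 0 1) (Pi.single j.succ 1) = A 0 j.succ := by
      rw [hAdef, hessian_eq]
    have e2 : fderiv ℝ (fderiv ℝ f) y₀ (Pi.single i.succ 1) (Pi.single j.succ 1)
        = A i.succ j.succ := by
      rw [hAdef, hessian_eq]
    rw [e1, e2, hsymmA i]
    have ha := haA.ne'
    field_simp
    ring
  have hgHess' : hessianMatrix g x₀ = Matrix.of fun i j : Fin n =>
      A i.succ j.succ - A 0 i.succ * A 0 j.succ / A 0 0 := by
    ext i j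
    rw [Matrix.of_apply, ← hgHess i j]
  rw [hgHess', det_schur A haA.ne' hsymmA]
  have hIa : (Complex.I * (A 0 0 : ℂ)) ≠ 0 :=
    mul_ne_zero Complex.I_ne_zero (Complex.ofReal_ne_zero.2 haA.ne')
  rw [mul_div_cancel_left₀ _ hIa]
end

section
/- For A ∈ Sym(ℝ^{n+1}) (indices 0,…,n), det(I_n + iA) = 0 if and only if a_00 = 0 and a⃗_0 = 0; equivalently, S = { A ∈ Sym(ℝ^{n+1}) : A = diag(0, A^+) }, the set of symmetric matrices whose 0-th row and column vanish. -/
open Real Filter Matrix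

/-- For `A ∈ Sym(ℝ^{n+1})`, `det(I_n + iA) = 0` iff `a₀₀ = 0` and `a⃗₀ = 0`;
equivalently, `S` is the set of symmetric matrices whose `0`-th row and column
vanish. -/
theorem S_characterization (n : ℕ) (A : Matrix (Fin (n+1)) (Fin (n+1)) ℝ)
    (hA : A.IsSymm) :
    (cmat A).det = 0 ↔ (A 0 0 = 0 ∧ ∀ j : Fin n, A 0 j.succ = 0) := by
  constructor
  · intro hdet
    obtain ⟨v, hv0, hMv⟩ := Matrix.exists_mulVec_eq_zero_iff.mpr hdet
    set s2 : ℂ := ∑ i, ∑ j, (starRingEnd ℂ) (v i) * (A i j : ℂ) * v j with hs2def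
    have hconj : (starRingEnd ℂ) s2 = s2 := by
      rw [hs2def, _root_.map_sum, Finset.sum_comm]
      refine Finset.sum_congr rfl fun i _ => ?_
      rw [_root_.map_sum]
      refine Finset.sum_congr rfl fun j _ => ?_
      simp only [_root_.map_mul, Complex.conj_conj, Complex.conj_ofReal]
      rw [hA.apply i j]
      ring
    have hs2im : s2.im = 0 := Complex.conj_eq_iff_im.mp hconj
    have h1 : star v ⬝ᵥ (cmat A).mulVec v = 0 := by rw [hMv, dotProduct_zero]
    have h2 : star v ⬝ᵥ (cmat A).mulVec v =
        (↑(∑ i, ((if i = 0 then 0 else 1) * Complex.normSq (v i) : ℝ)) : ℂ)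
          + Complex.I * s2 := by
      simp only [cmat, Matrix.add_mulVec, dotProduct_add,
        Matrix.smul_mulVec, dotProduct_smul, smul_eq_mul]
      congr 1
      · push_cast
        simp only [Inmat, dotProduct, Matrix.mulVec_diagonal, Pi.star_apply,
          Complex.star_def]
        refine Finset.sum_congr rfl fun i _ => ?_
        by_cases hi : i = 0 <;>
          simp [hi, Complex.normSq_eq_conj_mul_self, mul_comm]
      · rw [hs2def]
        simp only [dotProduct, Matrix.mulVec, dotProduct, Pi.star_apply,
          Complex.star_def, Matrix.map_apply, Finset.mul_sum]
        refine Finset.sum_congr rfl fun i _ => Finset.sum_congr rfl fun j _ => ?_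
        ring
    have hre : (∑ i, ((if i = 0 then 0 else 1) * Complex.normSq (v i) : ℝ)) = 0 := by
      have := congrArg Complex.re (h2.symm.trans h1)
      simpa [hs2im] using this
    have hvz : ∀ i : Fin (n+1), i ≠ 0 → v i = 0 := by
      intro i hi
      have hnonneg : ∀ i ∈ Finset.univ, (0:ℝ) ≤ (if i = 0 then 0 else 1) * Complex.normSq (v i) := by
        intro i _
        by_cases hi : i = 0 <;> simp [hi, Complex.normSq_nonneg]
      have := (Finset.sum_eq_zero_iff_of_nonneg hnonneg).mp hre i (Finset.mem_univ i)
      rw [if_neg hi, one_mul] at this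
      exact Complex.normSq_eq_zero.mp this
    have hv00 : v 0 ≠ 0 := by
      intro h
      apply hv0
      funext i
      by_cases hi : i = 0
      · rw [hi]; exact h
      · exact hvz i hi
    have hcol : ∀ i, (cmat A) i 0 = 0 := by
      intro i
      have hMvi : ∑ j, (cmat A) i j * v j = 0 := by
        simpa [Matrix.mulVec, dotProduct] using congrFun hMv i
      have : (cmat A) i 0 * v 0 = 0 := by
        rw [← hMvi]
        rw [Finset.sum_eq_single 0]
        · intro j _ hj
          rw [hvz j hj, mul_zero]
        · intro h; exact absurd (Finset.mem_univ _) h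
      exact (mul_eq_zero.mp this).resolve_right hv00
    have hAcol : ∀ i, A i 0 = 0 := by
      intro i
      have h := hcol i
      have hc : (cmat A) i 0 = Complex.I * (A i 0 : ℂ) := by
        by_cases hi : i = 0 <;>
          simp [cmat, Inmat, Matrix.diagonal_apply, hi]
      rw [hc] at h
      have := (mul_eq_zero.mp h).resolve_left Complex.I_ne_zero
      exact_mod_cast this
    refine ⟨hAcol 0, fun j => ?_⟩
    rw [← hA.apply 0 j.succ]
    exact hAcol j.succ
  · rintro ⟨h00, h0j⟩
    have hcol : ∀ i, A i 0 = 0 := by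
      intro i
      rw [hA.apply 0 i]
      refine Fin.cases ?_ ?_ i
      · exact h00
      · exact h0j
    rw [← Matrix.exists_mulVec_eq_zero_iff]
    refine ⟨Pi.single 0 1, ?_, ?_⟩
    · intro h
      have := congrFun h 0
      simp at this
    · funext i
      rw [Matrix.mulVec, dotProduct]
      rw [Finset.sum_eq_single 0]
      · simp [cmat, Inmat, Matrix.diagonal_apply, hcol i]
      · intro j _ hj
        simp [Pi.single_apply, hj.symm]
      · intro h; exact absurd (Finset.mem_univ _) h
end
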